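/- arXiv:2506.18370 — 4 statements merged into one kernel-verified Lean document; each statement's English description precedes it below -/
import Mathlib

section
/- Let ψ ∈ 𝒦 with Khinchin family (Y_t), and let q(t) be the extinction probability of the Galton–Watson process with offspring distribution Y_t. Then for all t ∈ (0,R_ψ): q(t) = Σ_{n≥1} A_n t^{n-1}/ψ(t)^n = g(t/ψ(t))/t, where g(z) = Σ A_n z^n solves g(z) = zψ(g(z)). -/
open Set Filter Topology

/-- The function defined by the power series with coefficients `b`. -/
noncomputable def psi (b : ℕ → ℝ) (t : ℝ) : ℝ := ∑' n, b n * t ^ n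

/-- The mean function of the Khinchin family of `psi b`. -/
noncomputable def mean (b : ℕ → ℝ) (t : ℝ) : ℝ := t * deriv (psi b) t / psi b t

/-- Coefficients of the solution of Lagrange's equation `g(z) = z ψ(g(z))`,
given by Lagrange's inversion formula. -/
noncomputable def lagA (b : ℕ → ℝ) : ℕ → ℝ := fun n =>
  if n = 0 then 0 else (n : ℝ)⁻¹ * PowerSeries.coeff (R := ℝ) (n - 1) ((PowerSeries.mk b) ^ n)

/-- The solution `g` of Lagrange's equation with data `ψ`, as a function. -/
noncomputable def lagG (b : ℕ → ℝ) (z : ℝ) : ℝ := ∑' n, lagA b n * z ^ n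

/-- Extinction probability of the Galton–Watson process with offspring
distribution `Y_t`: the smallest nonnegative fixed point of the offspring
probability generating function `ψ_t(x) = ψ(tx)/ψ(t)`. -/
noncomputable def extq (b : ℕ → ℝ) (t : ℝ) : ℝ :=
  sInf {x : ℝ | 0 ≤ x ∧ psi b (t * x) = x * psi b t}


namespace LagAux

open PowerSeries Finset

/-- "Composition" `F ∘ φ` of power series, correct when `constantCoeff φ = 0`. -/
noncomputable def Comp (F φ : PowerSeries ℝ) : PowerSeries ℝ :=
  PowerSeries.mk fun d => ∑ j ∈ Finset.range (d + 1), coeff j F * coeff d (φ ^ j)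

theorem coeff_Comp (F φ : PowerSeries ℝ) (d : ℕ) :
    coeff d (Comp F φ) = ∑ j ∈ Finset.range (d + 1), coeff j F * coeff d (φ ^ j) := by
  simp [Comp]

theorem coeff_pow_eq_zero {φ : PowerSeries ℝ} (h : constantCoeff φ = 0) :
    ∀ j d, d < j → coeff d (φ ^ j) = 0 := by
  intro j
  induction j with
  | zero => intro d hd; omega
  | succ j ih =>
    intro d hd
    rw [pow_succ, coeff_mul]
    apply Finset.sum_eq_zero
    intro p hp
    rw [Finset.HasAntidiagonal.mem_antidiagonal] at hp
    by_cases hc : p.1 < j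
    · rw [ih p.1 hc, zero_mul]
    · have h1 : p.1 = j := by omega
      have h2 : p.2 = 0 := by omega
      rw [h2]
      simpa [coeff_zero_eq_constantCoeff, h] using (mul_eq_zero_of_right _ rfl)

theorem coeff_pow_congr {φ φ' : PowerSeries ℝ} {d : ℕ}
    (h : ∀ m ≤ d, coeff m φ = coeff m φ') :
    ∀ j, ∀ e ≤ d, coeff e (φ ^ j) = coeff e (φ' ^ j) := by
  intro j
  induction j with
  | zero => intro e _; rfl
  | succ j ih =>
    intro e he
    rw [pow_succ, pow_succ, coeff_mul, coeff_mul]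
    apply Finset.sum_congr rfl
    intro p hp
    rw [Finset.HasAntidiagonal.mem_antidiagonal] at hp
    rw [ih p.1 (by omega), h p.2 (by omega)]

theorem coeff_pow_nonneg {φ : PowerSeries ℝ} (h : ∀ n, 0 ≤ coeff n φ) (j d : ℕ) :
    0 ≤ coeff d (φ ^ j) := by
  induction j generalizing d with
  | zero => simp [coeff_one]; positivity
  | succ j ih =>
    rw [pow_succ, coeff_mul]
    exact Finset.sum_nonneg fun p _ => mul_nonneg (ih p.1) (h p.2)

theorem coeff_pow_mono {φ φ' : PowerSeries ℝ} (h0 : ∀ n, 0 ≤ coeff n φ)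
    (h : ∀ n, coeff n φ ≤ coeff n φ') (j d : ℕ) :
    coeff d (φ ^ j) ≤ coeff d (φ' ^ j) := by
  induction j generalizing d with
  | zero => exact le_of_eq rfl
  | succ j ih =>
    rw [pow_succ, pow_succ, coeff_mul, coeff_mul]
    apply Finset.sum_le_sum
    intro p _
    exact mul_le_mul (ih p.1) (h p.2) (h0 p.2) (coeff_pow_nonneg (fun n => le_trans (h0 n) (h n)) _ _)

theorem sum_triangle (d : ℕ) (H : ℕ → ℕ → ℝ) (h0 : ∀ a b, d < a + b → H a b = 0) :
    ∑ j ∈ Finset.range (d + 1), ∑ q ∈ Finset.HasAntidiagonal.antidiagonal j, H q.1 q.2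
      = ∑ a ∈ Finset.range (d + 1), ∑ b ∈ Finset.range (d + 1), H a b := by
  have hdisj : (↑(Finset.range (d + 1)) : Set ℕ).PairwiseDisjoint Finset.HasAntidiagonal.antidiagonal := by
    intro i _ j _ hij
    simp only [Finset.disjoint_left]
    intro q hqi hqj
    rw [Finset.HasAntidiagonal.mem_antidiagonal] at hqi hqj
    exact hij (hqi ▸ hqj ▸ rfl)
  rw [← Finset.sum_biUnion hdisj]
  rw [← Finset.sum_product']
  apply Finset.sum_subset
  · intro q hq
    rw [Finset.mem_biUnion] at hq
    obtain ⟨j, hj, hq⟩ := hq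
    rw [Finset.HasAntidiagonal.mem_antidiagonal] at hq
    rw [Finset.mem_range] at hj
    simp only [Finset.mem_product, Finset.mem_range]
    omega
  · intro q hq hnq
    apply h0
    by_contra hc
    push_neg at hc
    exact hnq (Finset.mem_biUnion.2 ⟨q.1 + q.2, Finset.mem_range.2 (by omega),
      Finset.HasAntidiagonal.mem_antidiagonal.2 rfl⟩)

theorem Comp_one (φ : PowerSeries ℝ) : Comp 1 φ = 1 := by
  ext d
  rw [coeff_Comp]
  rw [Finset.sum_eq_single 0]
  · simp [coeff_one]
  · intro j _ hj
    simp [coeff_one, hj]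
  · intro h'; simp at h'

theorem Comp_mul {φ : PowerSeries ℝ} (h : constantCoeff φ = 0) (F F' : PowerSeries ℝ) :
    Comp F φ * Comp F' φ = Comp (F * F') φ := by
  ext d
  rw [coeff_mul, coeff_Comp]
  -- RHS transformation
  have hRHS : ∑ j ∈ Finset.range (d + 1), coeff j (F * F') * coeff d (φ ^ j)
      = ∑ a ∈ Finset.range (d + 1), ∑ c ∈ Finset.range (d + 1),
          (coeff a F * coeff c F') * coeff d (φ ^ a * φ ^ c) := by
    have : ∀ j ∈ Finset.range (d + 1), coeff j (F * F') * coeff d (φ ^ j)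
        = ∑ q ∈ Finset.HasAntidiagonal.antidiagonal j, (coeff q.1 F * coeff q.2 F') * coeff d (φ ^ q.1 * φ ^ q.2) := by
      intro j _
      rw [coeff_mul, Finset.sum_mul]
      apply Finset.sum_congr rfl
      intro q hq
      rw [Finset.HasAntidiagonal.mem_antidiagonal] at hq
      rw [← pow_add, hq]
    rw [Finset.sum_congr rfl this]
    exact sum_triangle d (fun a c => (coeff a F * coeff c F') * coeff d (φ ^ a * φ ^ c))
      (fun a c hac => by
        show (coeff a F * coeff c F') * coeff d (φ ^ a * φ ^ c) = 0
        rw [coeff_mul]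
        rw [Finset.sum_eq_zero, mul_zero]
        intro p hp
        rw [Finset.HasAntidiagonal.mem_antidiagonal] at hp
        rcases (by omega : p.1 < a ∨ p.2 < c) with h1 | h1
        · rw [coeff_pow_eq_zero h _ _ h1, zero_mul]
        · rw [coeff_pow_eq_zero h _ _ h1, mul_zero])
  rw [hRHS]
  -- LHS transformation
  have hL : ∀ p ∈ Finset.HasAntidiagonal.antidiagonal d,
      coeff p.1 (Comp F φ) * coeff p.2 (Comp F' φ)
        = ∑ a ∈ Finset.range (d + 1), ∑ c ∈ Finset.range (d + 1),
            (coeff a F * coeff c F') * (coeff p.1 (φ ^ a) * coeff p.2 (φ ^ c)) := by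
    intro p hp
    rw [Finset.HasAntidiagonal.mem_antidiagonal] at hp
    rw [coeff_Comp, coeff_Comp]
    have e1 : ∑ j ∈ Finset.range (p.1 + 1), coeff j F * coeff p.1 (φ ^ j)
        = ∑ j ∈ Finset.range (d + 1), coeff j F * coeff p.1 (φ ^ j) := by
      apply Finset.sum_subset
      · apply Finset.range_subset_range.2; omega
      · intro a _ ha
        rw [Finset.mem_range, not_lt] at ha
        rw [coeff_pow_eq_zero h _ _ (by omega), mul_zero]
    have e2 : ∑ j ∈ Finset.range (p.2 + 1), coeff j F' * coeff p.2 (φ ^ j)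
        = ∑ j ∈ Finset.range (d + 1), coeff j F' * coeff p.2 (φ ^ j) := by
      apply Finset.sum_subset
      · apply Finset.range_subset_range.2; omega
      · intro a _ ha
        rw [Finset.mem_range, not_lt] at ha
        rw [coeff_pow_eq_zero h _ _ (by omega), mul_zero]
    rw [e1, e2, Finset.sum_mul_sum]
    apply Finset.sum_congr rfl; intro a _
    apply Finset.sum_congr rfl; intro c _
    ring
  rw [Finset.sum_congr rfl hL, Finset.sum_comm]
  apply Finset.sum_congr rfl; intro a _
  rw [Finset.sum_comm]
  apply Finset.sum_congr rfl; intro c _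
  rw [coeff_mul, Finset.mul_sum]

theorem Comp_pow {φ : PowerSeries ℝ} (h : constantCoeff φ = 0) (F : PowerSeries ℝ) (m : ℕ) :
    (Comp F φ) ^ m = Comp (F ^ m) φ := by
  induction m with
  | zero => rw [pow_zero, pow_zero, Comp_one]
  | succ m ih => rw [pow_succ, pow_succ, ih, Comp_mul h]

variable (b : ℕ → ℝ)

/-- Iteration `g 0 = 0`, `g (k+1) = X * (ψ ∘ g k)`. -/
noncomputable def gg : ℕ → PowerSeries ℝ
  | 0 => 0
  | k + 1 => X * Comp (PowerSeries.mk b) (gg k)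

theorem constantCoeff_gg (k : ℕ) : constantCoeff (gg b k) = 0 := by
  cases k with
  | zero => simp [gg]
  | succ k => rw [gg, ← coeff_zero_eq_constantCoeff]; exact coeff_zero_X_mul _

theorem coeff_gg_succ (k n : ℕ) :
    coeff (n + 1) (gg b (k + 1))
      = ∑ j ∈ Finset.range (n + 1), b j * coeff n ((gg b k) ^ j) := by
  rw [gg, coeff_succ_X_mul, coeff_Comp]
  simp [coeff_mk]

variable {b}

theorem coeff_gg_nonneg (hnn : ∀ n, 0 ≤ b n) (k n : ℕ) : 0 ≤ coeff n (gg b k) := by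
  induction k generalizing n with
  | zero => simp [gg]
  | succ k ih =>
    cases n with
    | zero => rw [coeff_zero_eq_constantCoeff, constantCoeff_gg]
    | succ n =>
      rw [coeff_gg_succ]
      exact Finset.sum_nonneg fun j _ => mul_nonneg (hnn j) (coeff_pow_nonneg ih j n)

theorem coeff_gg_mono (hnn : ∀ n, 0 ≤ b n) (k n : ℕ) :
    coeff n (gg b k) ≤ coeff n (gg b (k + 1)) := by
  induction k generalizing n with
  | zero => simpa [gg] using coeff_gg_nonneg hnn 1 n
  | succ k ih =>
    cases n with
    | zero => simp [constantCoeff_gg]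
    | succ n =>
      rw [coeff_gg_succ, coeff_gg_succ]
      apply Finset.sum_le_sum
      intro j _
      exact mul_le_mul_of_nonneg_left
        (coeff_pow_mono (coeff_gg_nonneg hnn k) (fun m => ih m) j n) (hnn j)

theorem coeff_gg_stab (hnn : ∀ n, 0 ≤ b n) :
    ∀ k, ∀ n ≤ k, coeff n (gg b (k + 1)) = coeff n (gg b k) := by
  intro k
  induction k with
  | zero =>
    intro n hn
    interval_cases n
    simp [constantCoeff_gg]
  | succ k ih =>
    intro n hn
    cases n with
    | zero => simp [constantCoeff_gg]
    | succ m =>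
      rw [coeff_gg_succ, coeff_gg_succ]
      apply Finset.sum_congr rfl
      intro j _
      congr 1
      exact coeff_pow_congr (fun i hi => ih i (by omega)) j m (le_refl m)

theorem coeff_gg_stab' (hnn : ∀ n, 0 ≤ b n) {k K n : ℕ} (hk : n ≤ k) (hK : k ≤ K) :
    coeff n (gg b K) = coeff n (gg b k) := by
  induction K with
  | zero =>
    obtain rfl : k = 0 := Nat.le_zero.mp hK
    rfl
  | succ K ih =>
    rcases Nat.lt_or_ge k (K + 1) with h | h
    · rw [coeff_gg_stab hnn K n (by omega), ih (by omega)]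
    · have : k = K + 1 := by omega
      subst this; rfl


noncomputable def lcoef (b : ℕ → ℝ) (n : ℕ) : ℝ := coeff n (gg b n)

/-- The limit power series `G`. -/
noncomputable def limG (b : ℕ → ℝ) : PowerSeries ℝ := PowerSeries.mk (lcoef b)

section
variable {b : ℕ → ℝ} (hnn : ∀ n, 0 ≤ b n)
include hnn

theorem coeff_gg_eq_lcoef {k n : ℕ} (h : n ≤ k) : coeff n (gg b k) = lcoef b n :=
  coeff_gg_stab' hnn (le_refl n) h

theorem lcoef_zero : lcoef b 0 = 0 := by
  rw [lcoef, coeff_zero_eq_constantCoeff, constantCoeff_gg]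

theorem constantCoeff_limG : constantCoeff (limG b) = 0 := by
  rw [limG, ← coeff_zero_eq_constantCoeff, coeff_mk, lcoef_zero hnn]

theorem coeff_gg_mono' {k K : ℕ} (n : ℕ) (h : k ≤ K) :
    coeff n (gg b k) ≤ coeff n (gg b K) := by
  induction K, h using Nat.le_induction with
  | base => exact le_refl _
  | succ K hK ih => exact ih.trans (coeff_gg_mono hnn K n)

theorem coeff_gg_le_lcoef (k n : ℕ) : coeff n (gg b k) ≤ lcoef b n := by
  rcases le_or_gt k n with h | h
  · exact coeff_gg_mono' hnn n h
  · exact le_of_eq (coeff_gg_eq_lcoef hnn (le_of_lt h))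

theorem limG_eq : limG b = X * Comp (PowerSeries.mk b) (limG b) := by
  ext n
  cases n with
  | zero =>
    rw [coeff_zero_eq_constantCoeff, constantCoeff_limG hnn, ← coeff_zero_eq_constantCoeff,
      coeff_zero_X_mul]
  | succ m =>
    rw [coeff_succ_X_mul, coeff_Comp]
    have h1 : coeff (m + 1) (limG b) = coeff (m + 1) (gg b (m + 2)) := by
      rw [limG, coeff_mk, ← coeff_gg_eq_lcoef hnn (by omega : m + 1 ≤ m + 2)]
    rw [h1, coeff_gg_succ]
    apply Finset.sum_congr rfl
    intro j _
    rw [coeff_mk]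
    congr 1
    exact coeff_pow_congr
      (fun i hi => (coeff_gg_stab' hnn (le_refl i) (by omega : i ≤ m + 1)).trans
        (by rw [limG, coeff_mk, lcoef])) j m (le_refl m)

end

theorem limG_pow {b : ℕ → ℝ} (hnn : ∀ n, 0 ≤ b n) (m : ℕ) :
    (limG b) ^ m = X ^ m * Comp ((PowerSeries.mk b) ^ m) (limG b) := by
  induction m with
  | zero => rw [pow_zero, pow_zero, pow_zero, Comp_one, one_mul]
  | succ m ih =>
    calc (limG b) ^ (m + 1)
        = (X ^ m * Comp ((PowerSeries.mk b) ^ m) (limG b)) * (X * Comp (PowerSeries.mk b) (limG b)) := by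
          rw [pow_succ, ih, ← limG_eq hnn]
      _ = X ^ (m + 1) * (Comp ((PowerSeries.mk b) ^ m) (limG b) * Comp (PowerSeries.mk b) (limG b)) := by
          ring
      _ = X ^ (m + 1) * Comp ((PowerSeries.mk b) ^ (m + 1)) (limG b) := by
          rw [Comp_mul (constantCoeff_limG hnn), ← pow_succ]

theorem Dmix (Ψ : PowerSeries ℝ) {m l n : ℕ} (hm : 1 ≤ m) (h : m + l = n) :
    n • ((PowerSeries.derivative ℝ (Ψ ^ m)) * Ψ ^ l) = m • (PowerSeries.derivative ℝ (Ψ ^ n)) := by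
  subst h
  rw [Derivation.leibniz_pow, Derivation.leibniz_pow]
  have h1 : Ψ ^ (m - 1) * Ψ ^ l = Ψ ^ (m + l - 1) := by
    rw [← pow_add]; congr 1; omega
  rw [← h1]
  simp only [smul_eq_mul, nsmul_eq_mul]
  push_cast
  ring

theorem star {b : ℕ → ℝ} (hnn : ∀ n, 0 ≤ b n) :
    ∀ n : ℕ, 1 ≤ n → ∀ m : ℕ, 1 ≤ m → m ≤ n →
      (n : ℝ) * coeff n ((limG b) ^ m)
        = (m : ℝ) * coeff (n - m) ((PowerSeries.mk b) ^ n) := by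
  intro n
  induction n using Nat.strong_induction_on with
  | _ n IH =>
    intro hn m hm hmn
    set Ψ := PowerSeries.mk b with hΨ
    rw [limG_pow hnn m, coeff_X_pow_mul', if_pos hmn, coeff_Comp]
    rcases eq_or_lt_of_le hmn with heq | hlt
    · subst heq
      simp [coeff_one, hΨ]
    · set l := n - m with hl
      have hl1 : 1 ≤ l := by omega
      have hln : l < n := by omega
      have hmln : m + l = n := by omega
      have hlne : (l : ℝ) ≠ 0 := by positivity
      have hsum : (l : ℝ) * ∑ j ∈ Finset.range (l + 1), coeff j (Ψ ^ m) * coeff l ((limG b) ^ j)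
          = ∑ j ∈ Finset.range (l + 1), (j : ℝ) * coeff j (Ψ ^ m) * coeff (l - j) (Ψ ^ l) := by
        rw [Finset.mul_sum]
        apply Finset.sum_congr rfl
        intro j hj
        rw [Finset.mem_range] at hj
        rcases Nat.eq_zero_or_pos j with rfl | hj1
        · rw [pow_zero, PowerSeries.coeff_one, if_neg (by omega : ¬ l = 0)]
          simp
        · have hIH := IH l hln hl1 j hj1 (by omega)
          calc (l : ℝ) * (coeff j (Ψ ^ m) * coeff l ((limG b) ^ j))
              = coeff j (Ψ ^ m) * ((l : ℝ) * coeff l ((limG b) ^ j)) := by ring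
            _ = coeff j (Ψ ^ m) * ((j : ℝ) * coeff (l - j) (Ψ ^ l)) := by rw [hIH]
            _ = (j : ℝ) * coeff j (Ψ ^ m) * coeff (l - j) (Ψ ^ l) := by ring
      have hll : l - 1 + 1 = l := by omega
      have hder : coeff (l - 1) ((PowerSeries.derivative ℝ (Ψ ^ m)) * Ψ ^ l)
          = ∑ j ∈ Finset.range (l + 1), (j : ℝ) * coeff j (Ψ ^ m) * coeff (l - j) (Ψ ^ l) := by
        have h2 : ∑ j ∈ Finset.range (l + 1), (j : ℝ) * coeff j (Ψ ^ m) * coeff (l - j) (Ψ ^ l)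
            = ∑ a ∈ Finset.range l, ((a + 1 : ℕ) : ℝ) * coeff (a + 1) (Ψ ^ m)
                * coeff (l - (a + 1)) (Ψ ^ l) := by
          rw [Finset.sum_range_succ']
          simp
        rw [h2, coeff_mul, Finset.Nat.sum_antidiagonal_eq_sum_range_succ_mk, Nat.succ_eq_add_one, hll]
        apply Finset.sum_congr rfl
        intro a ha
        rw [Finset.mem_range] at ha
        dsimp only
        rw [PowerSeries.coeff_derivative]
        have h3 : l - 1 - a = l - (a + 1) := by omega
        rw [h3]
        push_cast
        ring
      have hfinal : (n : ℝ) * coeff (l - 1) ((PowerSeries.derivative ℝ (Ψ ^ m)) * Ψ ^ l)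
          = (m : ℝ) * ((l : ℝ) * coeff l (Ψ ^ n)) := by
        have hD := Dmix Ψ hm hmln
        have hthis := congrArg (fun F => coeff (l - 1) F) hD
        simp only [map_nsmul] at hthis
        simp only [nsmul_eq_mul] at hthis
        rw [hthis, PowerSeries.coeff_derivative, hll]
        have hc : ((l - 1 : ℕ) : ℝ) + 1 = (l : ℝ) := by exact_mod_cast hll
        rw [hc]
        ring
      apply mul_left_cancel₀ hlne
      calc (l : ℝ) * ((n : ℝ) * ∑ j ∈ Finset.range (l + 1), coeff j (Ψ ^ m) * coeff l ((limG b) ^ j))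
          = (n : ℝ) * ((l : ℝ) * ∑ j ∈ Finset.range (l + 1), coeff j (Ψ ^ m) * coeff l ((limG b) ^ j)) := by ring
        _ = (n : ℝ) * ∑ j ∈ Finset.range (l + 1), (j : ℝ) * coeff j (Ψ ^ m) * coeff (l - j) (Ψ ^ l) := by rw [hsum]
        _ = (n : ℝ) * coeff (l - 1) ((PowerSeries.derivative ℝ (Ψ ^ m)) * Ψ ^ l) := by rw [hder]
        _ = (m : ℝ) * ((l : ℝ) * coeff l (Ψ ^ n)) := hfinal
        _ = (l : ℝ) * ((m : ℝ) * coeff (n - m) (Ψ ^ n)) := by rw [← hl]; ring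

theorem psi_nonneg {b : ℕ → ℝ} (hnn : ∀ n, 0 ≤ b n) {x : ℝ} (hx : 0 ≤ x) : 0 ≤ psi b x :=
  tsum_nonneg fun n => mul_nonneg (hnn n) (pow_nonneg hx n)

theorem psi_mono {b : ℕ → ℝ} (hnn : ∀ n, 0 ≤ b n) {x y : ℝ} (hx : 0 ≤ x) (hxy : x ≤ y)
    (hy : Summable fun n => b n * y ^ n) : psi b x ≤ psi b y := by
  apply Summable.tsum_le_tsum _ (hy.of_nonneg_of_le
    (fun n => mul_nonneg (hnn n) (pow_nonneg hx n))
    (fun n => mul_le_mul_of_nonneg_left (pow_le_pow_left₀ hx hxy n) (hnn n))) hy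
  exact fun n => mul_le_mul_of_nonneg_left (pow_le_pow_left₀ hx hxy n) (hnn n)

theorem psi_pos {b : ℕ → ℝ} (hnn : ∀ n, 0 ≤ b n) (hb0 : 0 < b 0) {x : ℝ} (hx : 0 ≤ x)
    (hs : Summable fun n => b n * x ^ n) : 0 < psi b x := by
  have h0 : b 0 * x ^ 0 ≤ psi b x :=
    Summable.le_tsum hs 0 (fun j _ => mul_nonneg (hnn j) (pow_nonneg hx j))
  simpa using lt_of_lt_of_le (by simpa using hb0) h0

theorem eval_step {b : ℕ → ℝ} {R : ℝ} (hnn : ∀ n, 0 ≤ b n)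
    (hconv : ∀ x : ℝ, 0 ≤ x → x < R → Summable fun n => b n * x ^ n)
    {w e : ℝ} (hw : 0 < w) (he : 0 ≤ e) (heR : e < R) (k : ℕ)
    (hsum : Summable fun n => coeff n (gg b k) * w ^ n)
    (hev : (∑' n, coeff n (gg b k) * w ^ n) = e) :
    Summable (fun n => coeff n (gg b (k + 1)) * w ^ n) ∧
      (∑' n, coeff n (gg b (k + 1)) * w ^ n) = w * psi b e := by
  set φ := gg b k with hφ
  have hφ0 : constantCoeff φ = 0 := constantCoeff_gg b k
  have hφnn : ∀ n, 0 ≤ coeff n φ := coeff_gg_nonneg hnn k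
  -- powers
  have hpow : ∀ j, Summable (fun n => coeff n (φ ^ j) * w ^ n) ∧
      (∑' n, coeff n (φ ^ j) * w ^ n) = e ^ j := by
    intro j
    induction j with
    | zero =>
      have hf : (fun n => coeff n (φ ^ 0) * w ^ n) = fun n => if n = 0 then (1 : ℝ) else 0 := by
        funext n
        rcases Nat.eq_zero_or_pos n with rfl | hn
        · simp [coeff_one]
        · simp [coeff_one, hn.ne']
      rw [hf]
      constructor
      · apply summable_of_ne_finset_zero (s := {0})
        intro n hn
        simp only [Finset.mem_singleton] at hn
        simp [hn]
      · rw [tsum_eq_single 0 (by intro n hn; simp [hn])]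
        simp
    | succ j ih =>
      have hnf : Summable fun n => ‖coeff n (φ ^ j) * w ^ n‖ := by
        apply Summable.congr ih.1
        intro n
        rw [Real.norm_of_nonneg (mul_nonneg (coeff_pow_nonneg hφnn j n) (pow_nonneg hw.le n))]
      have hng : Summable fun n => ‖coeff n φ * w ^ n‖ := by
        apply Summable.congr hsum
        intro n
        rw [Real.norm_of_nonneg (mul_nonneg (hφnn n) (pow_nonneg hw.le n))]
      have hkey : ∀ n, coeff n (φ ^ (j + 1)) * w ^ n
          = ∑ p ∈ Finset.HasAntidiagonal.antidiagonal n,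
              (coeff p.1 (φ ^ j) * w ^ p.1) * (coeff p.2 φ * w ^ p.2) := by
        intro n
        rw [pow_succ, coeff_mul, Finset.sum_mul]
        apply Finset.sum_congr rfl
        intro p hp
        rw [Finset.HasAntidiagonal.mem_antidiagonal] at hp
        rw [← hp, pow_add]
        ring
      constructor
      · apply Summable.congr
          ((summable_norm_sum_mul_antidiagonal_of_summable_norm hnf hng).of_norm)
        intro n
        rw [hkey n]
      · have := tsum_mul_tsum_eq_tsum_sum_antidiagonal_of_summable_norm hnf hng
        rw [ih.2, hev] at this
        rw [tsum_congr hkey, ← this, pow_succ]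
  -- Fubini
  set F : ℕ × ℕ → ℝ := fun p => b p.1 * (coeff p.2 (φ ^ p.1) * w ^ p.2) with hF
  have hF0 : ∀ p, 0 ≤ F p := fun p =>
    mul_nonneg (hnn p.1) (mul_nonneg (coeff_pow_nonneg hφnn p.1 p.2) (pow_nonneg hw.le p.2))
  have hrow : ∀ j, Summable fun n => F (j, n) := fun j => ((hpow j).1).mul_left (b j)
  have hrowsum : ∀ j, (∑' n, F (j, n)) = b j * e ^ j := by
    intro j
    rw [hF]
    dsimp only
    rw [tsum_mul_left, (hpow j).2]
  have hFsummable : Summable F := by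
    apply (summable_prod_of_nonneg hF0).2
    constructor
    · exact fun j => hrow j
    · have : (fun j => ∑' n, F (j, n)) = fun j => b j * e ^ j := funext hrowsum
      rw [this]
      exact hconv e he heR
  have hswap : Summable (fun p : ℕ × ℕ => F p.swap) := hFsummable.prod_symm
  have hcolsummable : Summable (fun n => ∑' j, F (j, n)) := by
    have h := (summable_prod_of_nonneg (fun p => hF0 p.swap)).1 hswap
    exact h.2
  have hcolval : ∀ n, (∑' j, F (j, n)) = coeff n (Comp (PowerSeries.mk b) φ) * w ^ n := by
    intro n
    rw [tsum_eq_sum (s := Finset.range (n + 1))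
      (by
        intro j hj
        rw [Finset.mem_range, not_lt] at hj
        rw [hF]
        dsimp only
        rw [coeff_pow_eq_zero hφ0 j n (by omega), zero_mul, mul_zero])]
    rw [coeff_Comp, Finset.sum_mul]
    apply Finset.sum_congr rfl
    intro j _
    rw [hF, coeff_mk]
    dsimp only
    ring
  have hcol : ∀ n, Summable fun j => F (j, n) := by
    have h := (summable_prod_of_nonneg (fun p => hF0 p.swap)).1 hswap
    exact fun n => (h.1 n)
  have hexchange : (∑' j, ∑' n, F (j, n)) = ∑' n, ∑' j, F (j, n) := by
    have hFc : Summable (Function.uncurry fun j n => F (j, n)) := by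
      apply hFsummable.congr
      intro p
      rfl
    exact (Summable.tsum_comm' hFc hrow hcol).symm
  have hpsie : w * psi b e = ∑' n, coeff n (Comp (PowerSeries.mk b) φ) * w ^ (n + 1) := by
    have h1 : psi b e = ∑' j, ∑' n, F (j, n) := by
      rw [psi]
      apply tsum_congr
      intro j
      rw [hrowsum j]
    rw [h1, hexchange, tsum_congr hcolval, ← tsum_mul_left]
    apply tsum_congr
    intro n
    ring
  -- shift
  have hshiftsummable : Summable (fun n => coeff n (Comp (PowerSeries.mk b) φ) * w ^ (n + 1)) := by
    have := hcolsummable.congr hcolval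
    exact (this.mul_left w).congr (fun n => by ring)
  have hcoeffsucc : ∀ n, coeff (n + 1) (gg b (k + 1)) = coeff n (Comp (PowerSeries.mk b) φ) := by
    intro n
    rw [gg, coeff_succ_X_mul]
  have hcoeff0 : coeff 0 (gg b (k + 1)) = 0 := by
    rw [coeff_zero_eq_constantCoeff, constantCoeff_gg]
  have hsum1 : Summable (fun n => coeff n (gg b (k + 1)) * w ^ n) := by
    apply (summable_nat_add_iff 1).1
    apply hshiftsummable.congr
    intro n
    rw [hcoeffsucc n]
  refine ⟨hsum1, ?_⟩
  rw [Summable.tsum_eq_zero_add hsum1, hcoeff0, zero_mul, zero_add, hpsie]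
  apply tsum_congr
  intro n
  rw [hcoeffsucc n]

theorem coeff_limG_eq_lagA {b : ℕ → ℝ} (hnn : ∀ n, 0 ≤ b n) (n : ℕ) :
    coeff n (limG b) = lagA b n := by
  rcases Nat.eq_zero_or_pos n with rfl | hn
  · rw [limG, coeff_mk, lcoef_zero hnn, lagA]; simp
  · have h := star hnn n hn 1 le_rfl hn
    rw [pow_one] at h
    rw [lagA, if_neg (by omega), limG, coeff_mk]
    have hne : (n : ℝ) ≠ 0 := by positivity
    push_cast at h
    field_simp
    rw [limG, coeff_mk] at h
    linarith [h]

theorem lagA_nonneg {b : ℕ → ℝ} (hnn : ∀ n, 0 ≤ b n) (n : ℕ) : 0 ≤ lagA b n := by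
  rw [← coeff_limG_eq_lagA hnn, limG, coeff_mk, lcoef]
  exact coeff_gg_nonneg hnn n n

theorem lcoef_eq_lagA {b : ℕ → ℝ} (hnn : ∀ n, 0 ≤ b n) (n : ℕ) : lcoef b n = lagA b n := by
  rw [← coeff_limG_eq_lagA hnn, limG, coeff_mk]

end LagAux

open LagAux PowerSeries in
theorem stmt_13
    (b : ℕ → ℝ) (R : ℝ) (hR : 0 < R)
    (hnn : ∀ n, 0 ≤ b n) (hb0 : 0 < b 0)
    (hnc : ∃ n, 1 ≤ n ∧ b n ≠ 0)
    (hconv : ∀ t : ℝ, 0 ≤ t → t < R → Summable fun n => b n * t ^ n)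
    (t : ℝ) (ht : t ∈ Set.Ioo 0 R) :
    extq b t = ∑' n : ℕ, lagA b (n + 1) * t ^ n / psi b t ^ (n + 1) ∧
    extq b t = lagG b (t / psi b t) / t := by
  obtain ⟨ht0, htR⟩ := ht
  have hψt : 0 < psi b t := psi_pos hnn hb0 ht0.le (hconv t ht0.le htR)
  set w : ℝ := t / psi b t with hwdef
  have hw : 0 < w := div_pos ht0 hψt
  have hwψ : w * psi b t = t := div_mul_cancel₀ t hψt.ne'
  set S : Set ℝ := {x : ℝ | 0 ≤ x ∧ psi b (t * x) = x * psi b t} with hSdef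
  have h1S : (1 : ℝ) ∈ S := ⟨zero_le_one, by rw [mul_one, one_mul]⟩
  set ev : ℕ → ℝ := fun k => ∑' n, coeff n (gg b k) * w ^ n with hevdef
  have hev_nonneg : ∀ k, 0 ≤ ev k := fun k =>
    tsum_nonneg fun n => mul_nonneg (coeff_gg_nonneg hnn k n) (pow_nonneg hw.le n)
  -- main induction
  have hQ : ∀ k, (Summable fun n => coeff n (gg b k) * w ^ n) ∧
      (∀ x ∈ S, x ≤ 1 → ev k ≤ t * x) := by
    intro k
    induction k with
    | zero =>
      have h0 : (fun n => coeff n (gg b 0) * w ^ n) = fun _ => (0 : ℝ) := by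
        funext n; simp [gg]
      constructor
      · rw [h0]; exact summable_zero
      · intro x hx _
        have : ev 0 = 0 := by rw [hevdef]; dsimp only; rw [h0]; exact tsum_zero
        rw [this]
        exact mul_nonneg ht0.le hx.1
    | succ k ih =>
      have he : 0 ≤ ev k := hev_nonneg k
      have het : ev k ≤ t := by
        have := ih.2 1 h1S le_rfl
        simpa using this
      have heR : ev k < R := lt_of_le_of_lt het htR
      obtain ⟨hs1, heq1⟩ := eval_step hnn hconv hw he heR k ih.1 rfl
      refine ⟨hs1, ?_⟩
      intro x hxS hx1
      have htx0 : 0 ≤ t * x := mul_nonneg ht0.le hxS.1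
      have htxR : t * x < R := by nlinarith
      have h2 : psi b (ev k) ≤ psi b (t * x) :=
        psi_mono hnn he (ih.2 x hxS hx1) (hconv (t * x) htx0 htxR)
      have h3 : ev (k + 1) = w * psi b (ev k) := heq1
      rw [h3]
      calc w * psi b (ev k) ≤ w * psi b (t * x) := by nlinarith
        _ = w * (x * psi b t) := by rw [hxS.2]
        _ = x * (w * psi b t) := by ring
        _ = t * x := by rw [hwψ]; ring
  have hrec : ∀ k, ev (k + 1) = w * psi b (ev k) := by
    intro k
    have het : ev k ≤ t := by simpa using (hQ k).2 1 h1S le_rfl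
    exact (eval_step hnn hconv hw (hev_nonneg k) (lt_of_le_of_lt het htR) k (hQ k).1 rfl).2
  -- series with lagA coefficients
  have hPle : ∀ N : ℕ, ∑ n ∈ Finset.range N, lagA b n * w ^ n ≤ ev N := by
    intro N
    have h1 : ∀ n ∈ Finset.range N, lagA b n * w ^ n = coeff n (gg b N) * w ^ n := by
      intro n hn
      rw [Finset.mem_range] at hn
      rw [← lcoef_eq_lagA hnn, ← coeff_gg_eq_lcoef hnn (by omega : n ≤ N)]
    rw [Finset.sum_congr rfl h1]
    exact Summable.sum_le_tsum (Finset.range N)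
      (fun n _ => mul_nonneg (coeff_gg_nonneg hnn N n) (pow_nonneg hw.le n)) (hQ N).1
  have hterm_nn : ∀ n, 0 ≤ lagA b n * w ^ n := fun n =>
    mul_nonneg (lagA_nonneg hnn n) (pow_nonneg hw.le n)
  have hLsummable : Summable fun n => lagA b n * w ^ n := by
    apply summable_of_sum_range_le hterm_nn
    intro N
    exact (hPle N).trans (by simpa using (hQ N).2 1 h1S le_rfl)
  set L : ℝ := ∑' n, lagA b n * w ^ n with hLdef
  have hLle : ∀ x ∈ S, x ≤ 1 → L ≤ t * x := by
    intro x hxS hx1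
    apply Real.tsum_le_of_sum_range_le hterm_nn
    intro N
    exact (hPle N).trans ((hQ N).2 x hxS hx1)
  have hevleL : ∀ k, ev k ≤ L := by
    intro k
    apply Summable.tsum_le_tsum _ (hQ k).1 hLsummable
    intro n
    apply mul_le_mul_of_nonneg_right _ (pow_nonneg hw.le n)
    rw [← lcoef_eq_lagA hnn]
    exact coeff_gg_le_lcoef hnn k n
  have hmono : Monotone ev := by
    apply monotone_nat_of_le_succ
    intro k
    apply Summable.tsum_le_tsum _ (hQ k).1 (hQ (k + 1)).1
    intro n
    exact mul_le_mul_of_nonneg_right (coeff_gg_mono hnn k n) (pow_nonneg hw.le n)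
  have hbdd : BddAbove (Set.range ev) := ⟨L, by rintro _ ⟨k, rfl⟩; exact hevleL k⟩
  set U : ℝ := ⨆ k, ev k with hUdef
  have htendU : Tendsto ev atTop (𝓝 U) := tendsto_atTop_ciSup hmono hbdd
  have hUleL : U ≤ L := ciSup_le hevleL
  have hU0 : 0 ≤ U := le_trans (hev_nonneg 0) (le_ciSup hbdd 0)
  have hUt : U ≤ t := hUleL.trans (by simpa using hLle 1 h1S le_rfl)
  -- continuity of psi on [0, t]
  have hcont : ContinuousOn (psi b) (Set.Icc 0 t) := by
    have : ContinuousOn (fun x => ∑' n, b n * x ^ n) (Set.Icc (0:ℝ) t) := by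
      apply continuousOn_tsum (u := fun n => b n * t ^ n)
        (fun i => (continuous_const.mul (continuous_pow i)).continuousOn)
        (hconv t ht0.le htR)
      intro n x hx
      change ‖b n * x ^ n‖ ≤ _
      rw [Real.norm_of_nonneg (mul_nonneg (hnn n) (pow_nonneg hx.1 n))]
      exact mul_le_mul_of_nonneg_left (pow_le_pow_left₀ hx.1 hx.2 n) (hnn n)
    exact this
  have hmem : ∀ k, ev k ∈ Set.Icc (0:ℝ) t := fun k =>
    ⟨hev_nonneg k, by simpa using (hQ k).2 1 h1S le_rfl⟩
  have hUmem : U ∈ Set.Icc (0:ℝ) t := ⟨hU0, hUt⟩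
  have htendψ : Tendsto (fun k => psi b (ev k)) atTop (𝓝 (psi b U)) := by
    apply (hcont U hUmem).tendsto.comp
    rw [tendsto_nhdsWithin_iff]
    exact ⟨htendU, Eventually.of_forall hmem⟩
  have hUfix : U = w * psi b U := by
    have hA : Tendsto (fun k => ev (k + 1)) atTop (𝓝 U) :=
      htendU.comp (tendsto_add_atTop_nat 1)
    have hB : Tendsto (fun k => ev (k + 1)) atTop (𝓝 (w * psi b U)) := by
      have := htendψ.const_mul w
      apply Tendsto.congr _ this
      intro k
      exact (hrec k).symm
    exact tendsto_nhds_unique hA hB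
  -- U / t is the extinction probability
  have hUtS : U / t ∈ S := by
    refine ⟨div_nonneg hU0 ht0.le, ?_⟩
    rw [mul_comm, div_mul_cancel₀ U ht0.ne']
    have h2 : U * psi b t = t * psi b U := by
      calc U * psi b t = (w * psi b U) * psi b t := by rw [← hUfix]
        _ = (w * psi b t) * psi b U := by ring
        _ = t * psi b U := by rw [hwψ]
    field_simp
    linarith [h2]
  have hUt1 : U / t ≤ 1 := (div_le_one ht0).2 hUt
  have hq : extq b t = U / t := by
    apply le_antisymm
    · exact csInf_le ⟨0, fun x hx => hx.1⟩ hUtS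
    · apply le_csInf ⟨1, h1S⟩
      intro x hxS
      rcases le_or_gt x 1 with hx1 | hx1
      · have hLx := hLle x hxS hx1
        have hUx : U ≤ t * x := le_trans hUleL hLx
        rw [div_le_iff₀ ht0]
        linarith
      · exact le_trans hUt1 hx1.le
  have hLU : L = U := by
    apply le_antisymm _ hUleL
    have h3 := hLle (U / t) hUtS hUt1
    rw [mul_comm, div_mul_cancel₀ U ht0.ne'] at h3
    exact h3
  have hq2 : extq b t = L / t := by rw [hq, hLU]
  have hL0 : lagA b 0 = 0 := by simp [lagA]
  have hshift : L = ∑' n, lagA b (n + 1) * w ^ (n + 1) := by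
    rw [hLdef, Summable.tsum_eq_zero_add hLsummable, hL0]
    simp
  constructor
  · rw [hq2, hshift, ← tsum_div_const]
    apply tsum_congr
    intro n
    have hwp : w ^ (n + 1) = t ^ (n + 1) / psi b t ^ (n + 1) := by
      rw [hwdef, div_pow]
    rw [hwp]
    field_simp
    ring
  · have hlg : lagG b (t / psi b t) = L := by
      rw [lagG, hLdef]
    rw [hq2, hlg]
end

section
/- Let ψ ∈ 𝒦 with radius R_ψ and suppose lim_{t↑R_ψ} ψ(t)/t = +∞. Then the extinction probability q(t) of the Galton–Watson process with offspring distribution Y_t satisfies q(t) ~ ψ(0)/ψ(t) as t ↑ R_ψ, i.e. lim_{t↑R_ψ} q(t)ψ(t)/ψ(0) = 1. -/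
open Set Filter Topology

section aux

variable {b : ℕ → ℝ} {R : ℝ}

lemma psi_zero' (b : ℕ → ℝ) : psi b 0 = b 0 := by
  unfold psi
  rw [tsum_eq_single 0]
  · simp
  · intro n hn; simp [zero_pow hn]

lemma psi_mono (hnn : ∀ n, 0 ≤ b n)
    (hconv : ∀ t : ℝ, 0 ≤ t → t < R → Summable fun n => b n * t ^ n)
    {x y : ℝ} (hx : 0 ≤ x) (hxy : x ≤ y) (hyR : y < R) :
    psi b x ≤ psi b y := by
  refine Summable.tsum_le_tsum (fun n => ?_) (hconv x hx (lt_of_le_of_lt hxy hyR)) (hconv y (hx.trans hxy) hyR)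
  exact mul_le_mul_of_nonneg_left (pow_le_pow_left₀ hx hxy n) (hnn n)

lemma le_psi (hnn : ∀ n, 0 ≤ b n)
    (hconv : ∀ t : ℝ, 0 ≤ t → t < R → Summable fun n => b n * t ^ n)
    {x : ℝ} (hx : 0 ≤ x) (hxR : x < R) : b 0 ≤ psi b x := by
  have := Summable.le_tsum (hconv x hx hxR) 0
    (fun j _ => mul_nonneg (hnn j) (pow_nonneg hx j))
  simpa [psi] using this

/-- Continuity of `x ↦ ψ(t x)` on `[0,1]`. -/
lemma psi_contOn (hnn : ∀ n, 0 ≤ b n)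
    (hconv : ∀ t : ℝ, 0 ≤ t → t < R → Summable fun n => b n * t ^ n)
    {t : ℝ} (ht0 : 0 ≤ t) (htR : t < R) :
    ContinuousOn (fun x : ℝ => psi b (t * x)) (Icc 0 1) := by
  have : ContinuousOn (fun x : ℝ => ∑' n, b n * (t * x) ^ n) (Icc 0 1) := by
    refine continuousOn_tsum (u := fun n => b n * t ^ n)
      (fun n => (Continuous.continuousOn (by continuity))) (hconv t ht0 htR) ?_
    intro n x hx
    have hx0 : 0 ≤ x := hx.1
    have htx : 0 ≤ t * x := mul_nonneg ht0 hx0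
    rw [Real.norm_eq_abs, abs_of_nonneg (mul_nonneg (hnn n) (pow_nonneg htx n))]
    refine mul_le_mul_of_nonneg_left ?_ (hnn n)
    refine pow_le_pow_left₀ htx ?_ n
    nlinarith [hx.2]
  exact this

/-- The extinction probability is a fixed point in `[0,1]`. -/
lemma extq_spec (hnn : ∀ n, 0 ≤ b n)
    (hconv : ∀ t : ℝ, 0 ≤ t → t < R → Summable fun n => b n * t ^ n)
    {t : ℝ} (ht0 : 0 ≤ t) (htR : t < R) :
    0 ≤ extq b t ∧ extq b t ≤ 1 ∧ psi b (t * extq b t) = extq b t * psi b t := by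
  set S : Set ℝ := {x : ℝ | 0 ≤ x ∧ psi b (t * x) = x * psi b t} with hS
  have h1S : (1 : ℝ) ∈ S := ⟨zero_le_one, by simp⟩
  have hbdd : BddBelow S := ⟨0, fun x hx => hx.1⟩
  set T : Set ℝ := Icc (0:ℝ) 1 ∩ {x | psi b (t * x) - x * psi b t = 0} with hT
  have hTsub : T ⊆ S := by
    rintro x ⟨hxI, hx⟩
    exact ⟨hxI.1, by linarith [sub_eq_zero.mp hx]⟩
  have h1T : (1 : ℝ) ∈ T := ⟨⟨zero_le_one, le_refl 1⟩, by simp⟩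
  have hclosed : IsClosed T := by
    refine ContinuousOn.preimage_isClosed_of_isClosed ?_ isClosed_Icc isClosed_singleton
    exact (psi_contOn hnn hconv ht0 htR).sub ((continuous_id.mul continuous_const).continuousOn)
  have hTbdd : BddBelow T := ⟨0, fun x hx => hx.1.1⟩
  have hmem : sInf T ∈ T := hclosed.csInf_mem ⟨1, h1T⟩ hTbdd
  have hq : extq b t = sInf T := by
    apply le_antisymm
    · exact csInf_le hbdd (hTsub hmem)
    · refine le_csInf ⟨1, h1S⟩ ?_
      intro x hx
      rcases le_or_gt x 1 with hx1 | hx1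
      · exact csInf_le hTbdd ⟨⟨hx.1, hx1⟩, by simp [Set.mem_setOf_eq, hx.2]⟩
      · exact le_trans hmem.1.2 hx1.le
  rw [hq]
  exact ⟨hmem.1.1, hmem.1.2, by linarith [sub_eq_zero.mp hmem.2]⟩

/-- If `ψ(t/2) ≤ ψ(t)/2` then the extinction probability is at most `1/2`. -/
lemma extq_le_half (hnn : ∀ n, 0 ≤ b n) (hb0 : 0 < b 0)
    (hconv : ∀ t : ℝ, 0 ≤ t → t < R → Summable fun n => b n * t ^ n)
    {t : ℝ} (ht0 : 0 ≤ t) (htR : t < R)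
    (hhalf : psi b (t / 2) ≤ psi b t / 2) : extq b t ≤ 1 / 2 := by
  set g : ℝ → ℝ := fun x => psi b (t * x) - x * psi b t with hg
  have hcont : ContinuousOn g (Icc 0 (1/2 : ℝ)) := by
    refine ContinuousOn.sub (ContinuousOn.mono (psi_contOn hnn hconv ht0 htR) ?_)
      ((continuous_id.mul continuous_const).continuousOn)
    exact Icc_subset_Icc le_rfl (by norm_num)
  have hg0 : 0 < g 0 := by
    simp only [hg, mul_zero, zero_mul, sub_zero, psi_zero']
    exact hb0
  have hg12 : g (1/2 : ℝ) ≤ 0 := by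
    simp only [hg]
    have : t * (1/2 : ℝ) = t / 2 := by ring
    rw [this]
    linarith
  have := intermediate_value_Icc' (by norm_num : (0:ℝ) ≤ 1/2) hcont
  have h0mem : (0 : ℝ) ∈ Icc (g (1/2)) (g 0) := ⟨hg12, hg0.le⟩
  obtain ⟨y, hy, hgy⟩ := this h0mem
  have hyS : y ∈ {x : ℝ | 0 ≤ x ∧ psi b (t * x) = x * psi b t} := by
    refine ⟨hy.1, ?_⟩
    have : psi b (t * y) - y * psi b t = 0 := hgy
    linarith [sub_eq_zero.mp this]
  exact le_trans (csInf_le ⟨0, fun x hx => hx.1⟩ hyS) hy.2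

/-- Key upper bound: if `q ≤ 1/2` then `ψ(tq) ≤ b₀ + 2 q ψ(t/2)`. -/
lemma psi_upper (hnn : ∀ n, 0 ≤ b n)
    (hconv : ∀ t : ℝ, 0 ≤ t → t < R → Summable fun n => b n * t ^ n)
    {t q : ℝ} (ht0 : 0 ≤ t) (htR : t < R) (hq0 : 0 ≤ q) (hq : q ≤ 1 / 2) :
    psi b (t * q) ≤ b 0 + 2 * q * psi b (t / 2) := by
  have ht2 : (0:ℝ) ≤ t / 2 := by linarith
  have ht2R : t / 2 < R := by linarith
  have hS2 : Summable fun n => 2 * q * (b n * (t / 2) ^ n) := (hconv _ ht2 ht2R).mul_left _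
  have hS1 : Summable fun n : ℕ => b 0 * (0:ℝ) ^ n :=
    (summable_geometric_of_lt_one le_rfl one_pos).mul_left _
  have hSe : Summable fun n : ℕ => b 0 * (0:ℝ) ^ n + 2 * q * (b n * (t / 2) ^ n) := hS1.add hS2
  have htq0 : 0 ≤ t * q := mul_nonneg ht0 hq0
  have htqR : t * q < R := by nlinarith
  have hle : ∀ n, b n * (t * q) ^ n ≤ b 0 * (0:ℝ) ^ n + 2 * q * (b n * (t / 2) ^ n) := by
    intro n
    rcases n with _ | m
    · simp
      nlinarith [hnn 0, hq0]
    · show b (m+1) * (t * q) ^ (m+1) ≤ b 0 * (0:ℝ) ^ (m+1) + 2 * q * (b (m+1) * (t / 2) ^ (m+1))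
      have h1 : (t * q) ^ (m + 1) = t ^ (m + 1) * (q * q ^ m) := by ring
      have h2 : q ^ m ≤ (1/2 : ℝ) ^ m := pow_le_pow_left₀ hq0 hq m
      have h3 : b (m+1) * (t * q) ^ (m+1) ≤ b (m+1) * (t ^ (m+1) * (q * (1/2:ℝ)^m)) := by
        rw [h1]
        refine mul_le_mul_of_nonneg_left ?_ (hnn (m+1))
        refine mul_le_mul_of_nonneg_left ?_ (pow_nonneg ht0 _)
        exact mul_le_mul_of_nonneg_left h2 hq0
      have h4 : b (m+1) * (t ^ (m+1) * (q * (1/2:ℝ)^m)) = 2 * q * (b (m+1) * (t/2) ^ (m+1)) := by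
        rw [div_pow]
        rw [div_pow, one_pow]
        field_simp
        ring
      calc b (m+1) * (t * q) ^ (m + 1) ≤ b (m+1) * (t ^ (m+1) * (q * (1/2:ℝ)^m)) := h3
        _ = 2 * q * (b (m+1) * (t/2) ^ (m+1)) := h4
        _ ≤ b 0 * (0:ℝ) ^ (m+1) + 2 * q * (b (m+1) * (t/2) ^ (m+1)) := by
            simp
  have := Summable.tsum_le_tsum hle (hconv _ htq0 htqR) hSe
  have e1 : (∑' n : ℕ, b 0 * (0:ℝ) ^ n) = b 0 := by
    rw [tsum_eq_single 0]
    · simp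
    · intro n hn; simp [zero_pow hn]
  have heq : (∑' n : ℕ, (b 0 * (0:ℝ) ^ n + 2 * q * (b n * (t / 2) ^ n)))
      = b 0 + 2 * q * psi b (t / 2) := by
    unfold psi
    rw [Summable.tsum_add hS1 hS2, e1, tsum_mul_left]
  unfold psi
  rw [heq] at this
  exact this

end aux

theorem stmt_16
    (b : ℕ → ℝ) (R : ℝ) (hR : 0 < R)
    (hnn : ∀ n, 0 ≤ b n) (hb0 : 0 < b 0)
    (hnc : ∃ n, 1 ≤ n ∧ b n ≠ 0)
    (hconv : ∀ t : ℝ, 0 ≤ t → t < R → Summable fun n => b n * t ^ n)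
    (hinf : Filter.Tendsto (fun t => psi b t / t) (nhdsWithin R (Set.Iio R)) Filter.atTop) :
    Filter.Tendsto (fun t => extq b t * psi b t / psi b 0)
      (nhdsWithin R (Set.Iio R)) (nhds 1) := by
  set l := nhdsWithin R (Set.Iio R) with hl
  have htendt : Tendsto (fun t : ℝ => t) l (nhds R) :=
    tendsto_id.mono_left nhdsWithin_le_nhds
  have hev_pos : ∀ᶠ t in l, 0 < t := htendt.eventually (eventually_gt_nhds hR)
  have hev_lt : ∀ᶠ t in l, t < R := eventually_mem_nhdsWithin.mono (fun t ht => ht)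
  -- ψ(t) → ∞
  have hpsiTop : Tendsto (fun t => psi b t) l atTop := by
    have h := hinf.atTop_mul_pos hR htendt
    refine h.congr' ?_
    filter_upwards [hev_pos] with t ht
    field_simp
  set M : ℝ := 2 * psi b (R / 2) with hM
  have hRhalf0 : (0:ℝ) ≤ R / 2 := by linarith
  have hRhalfR : R / 2 < R := by linarith
  have hMpos : 0 < M := by
    have := le_psi hnn hconv hRhalf0 hRhalfR
    simp only [hM]; linarith
  set K : ℝ := M * (b 0 + M / 2) with hK
  have hKpos : 0 < K := by positivity
  have hevM : ∀ᶠ t in l, M ≤ psi b t := hpsiTop.eventually_ge_atTop M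
  -- eventual bounds
  have hbounds : ∀ᶠ t in l, b 0 ≤ extq b t * psi b t ∧
      extq b t * psi b t ≤ b 0 + K / psi b t := by
    filter_upwards [hev_pos, hev_lt, hevM] with t ht0 htR hMt
    obtain ⟨hq0, hq1, hfix⟩ := extq_spec hnn hconv ht0.le htR
    set q := extq b t with hqdef
    have hpsit_pos : 0 < psi b t := lt_of_lt_of_le hb0 (le_psi hnn hconv ht0.le htR)
    have htq0 : 0 ≤ t * q := mul_nonneg ht0.le hq0
    have htqR : t * q < R := by nlinarith
    have hlow : b 0 ≤ q * psi b t := by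
      rw [← hfix]; exact le_psi hnn hconv htq0 htqR
    have hhalfmono : psi b (t / 2) ≤ psi b (R / 2) :=
      psi_mono hnn hconv (by linarith) (by linarith) hRhalfR
    have hhalf : psi b (t / 2) ≤ psi b t / 2 := by
      simp only [hM] at hMt; linarith
    have hqhalf : q ≤ 1 / 2 := extq_le_half hnn hb0 hconv ht0.le htR hhalf
    have hup : q * psi b t ≤ b 0 + M * q := by
      have h1 : psi b (t * q) ≤ b 0 + 2 * q * psi b (t / 2) :=
        psi_upper hnn hconv ht0.le htR hq0 hqhalf
      have h2 : 2 * q * psi b (t / 2) ≤ M * q := by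
        have := mul_le_mul_of_nonneg_left hhalfmono (by linarith : (0:ℝ) ≤ 2 * q)
        simp only [hM]; nlinarith
      rw [← hfix]; linarith
    have hqsmall : q ≤ (b 0 + M / 2) / psi b t := by
      rw [le_div_iff₀ hpsit_pos]
      nlinarith
    constructor
    · exact hlow
    · have : M * q ≤ K / psi b t := by
        rw [hK, mul_div_assoc]
        exact mul_le_mul_of_nonneg_left hqsmall hMpos.le
      linarith
  have hmain : Tendsto (fun t => extq b t * psi b t) l (nhds (b 0)) := by
    have hupper : Tendsto (fun t => b 0 + K / psi b t) l (nhds (b 0)) := by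
      have : Tendsto (fun t => K / psi b t) l (nhds 0) :=
        hpsiTop.const_div_atTop K
      simpa using (tendsto_const_nhds (x := b 0)).add this
    exact tendsto_of_tendsto_of_tendsto_of_le_of_le' tendsto_const_nhds hupper
      (hbounds.mono fun t h => h.1) (hbounds.mono fun t h => h.2)
  have := hmain.div_const (psi b 0)
  rw [psi_zero'] at this
  rw [div_self hb0.ne'] at this
  simpa [psi_zero'] using this
end

section
/- Let ψ ∈ 𝒦* with apex τ and extinction probability function q. For all t ∈ (0,R_ψ) with t ≠ τ, q is differentiable at t and q'(t) = (q(t)/t)·((1 - m_ψ(t))/(1 - m_ψ(t·q(t))) - 1), where m_ψ(s) = sψ'(s)/ψ(s). In particular q'(t) < 0 for t ∈ (τ,R_ψ). -/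
open Set Filter Topology

/-- Auxiliary: the derivative series of `psi b`. -/
noncomputable def psiD (b : ℕ → ℝ) (t : ℝ) : ℝ := ∑' (n : ℕ), (n : ℝ) * b n * t ^ (n - 1)

/-- Auxiliary: `t ψ'(t) - ψ(t)`. -/
noncomputable def phiAux (b : ℕ → ℝ) (t : ℝ) : ℝ := t * psiD b t - psi b t

/-- Auxiliary: `ψ(t)/t`. -/
noncomputable def hAux (b : ℕ → ℝ) (t : ℝ) : ℝ := psi b t / t

theorem summable_nmul {b : ℕ → ℝ} (hnn : ∀ n, 0 ≤ b n) {x y : ℝ} (hx : 0 ≤ x) (hxy : x < y)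
    (hs : Summable fun n => b n * y ^ n) :
    Summable fun n : ℕ => (n : ℝ) * (b n * x ^ n) := by
  have hy : 0 < y := lt_of_le_of_lt hx hxy
  set C := ∑' n, b n * y ^ n with hC
  have hCle : ∀ n, b n * y ^ n ≤ C := fun n =>
    Summable.le_tsum hs n fun m _ => mul_nonneg (hnn m) (pow_nonneg hy.le m)
  have hr : |x / y| < 1 := by
    rw [abs_of_nonneg (div_nonneg hx hy.le)]
    exact (div_lt_one hy).2 hxy
  have hgeom : Summable fun n : ℕ => C * ((n : ℝ) * (x / y) ^ n) := by
    have h1 : Summable fun n : ℕ => (n : ℝ) ^ 1 * (x / y) ^ n :=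
      summable_pow_mul_geometric_of_norm_lt_one 1 (by rwa [Real.norm_eq_abs])
    have h2 : Summable fun n : ℕ => (n : ℝ) * (x / y) ^ n := by
      simpa [pow_one] using h1
    exact h2.mul_left C
  refine Summable.of_nonneg_of_le (fun n => ?_) (fun n => ?_) hgeom
  · exact mul_nonneg (Nat.cast_nonneg n) (mul_nonneg (hnn n) (pow_nonneg hx n))
  · have hxn : x ^ n = (x / y) ^ n * y ^ n := by
      rw [div_pow]
      field_simp
    calc (n : ℝ) * (b n * x ^ n) = (n : ℝ) * (x / y) ^ n * (b n * y ^ n) := by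
          rw [hxn]; ring
      _ ≤ (n : ℝ) * (x / y) ^ n * C := by
          refine mul_le_mul_of_nonneg_left (hCle n) ?_
          exact mul_nonneg (Nat.cast_nonneg n) (pow_nonneg (div_nonneg hx hy.le) n)
      _ = C * ((n : ℝ) * (x / y) ^ n) := by ring

theorem hasDerivAt_psi {b : ℕ → ℝ} {R : ℝ} (hnn : ∀ n, 0 ≤ b n)
    (hconv : ∀ t : ℝ, 0 ≤ t → t < R → Summable fun n => b n * t ^ n)
    {t : ℝ} (ht : t ∈ Ioo (0 : ℝ) R) :
    HasDerivAt (psi b) (psiD b t) t := by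
  obtain ⟨ht0, htR⟩ := ht
  set r := (t + R) / 2 with hrdef
  have hrt : t < r := by rw [hrdef]; linarith
  have hrR : r < R := by rw [hrdef]; linarith
  have hr0 : 0 < r := lt_trans ht0 hrt
  set y := (r + R) / 2 with hydef
  have hry : r < y := by rw [hydef]; linarith
  have hyR : y < R := by rw [hydef]; linarith
  have hsy : Summable fun n => b n * y ^ n := hconv y (by linarith) hyR
  have hu : Summable fun n : ℕ => (n : ℝ) * (b n * r ^ n) / r :=
    (summable_nmul hnn hr0.le hry hsy).div_const r
  have key := hasDerivAt_tsum_of_isPreconnected (F := ℝ)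
    (u := fun n : ℕ => (n : ℝ) * (b n * r ^ n) / r)
    (g := fun n z => b n * z ^ n)
    (g' := fun (n : ℕ) (z : ℝ) => (n : ℝ) * b n * z ^ (n - 1))
    hu (isOpen_Ioo (a := -r) (b := r)) isPreconnected_Ioo
    (fun n z _ => by
      have := (hasDerivAt_pow n z).const_mul (b n)
      convert this using 1
      · rfl
      ring)
    (fun n z hz => by
      have habs : |z| ≤ r := le_of_lt (abs_lt.2 ⟨hz.1, hz.2⟩)
      rw [Real.norm_eq_abs, abs_mul, abs_mul, abs_of_nonneg (hnn n), Nat.abs_cast, abs_pow]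
      rcases Nat.eq_zero_or_pos n with hn | hn
      · subst hn; simp
      · have h1 : |z| ^ (n - 1) ≤ r ^ (n - 1) := pow_le_pow_left₀ (abs_nonneg z) habs _
        have h2 : (n : ℝ) * b n * |z| ^ (n - 1) ≤ (n : ℝ) * b n * r ^ (n - 1) := by
          refine mul_le_mul_of_nonneg_left h1 ?_
          exact mul_nonneg (Nat.cast_nonneg n) (hnn n)
        have h3 : (n : ℝ) * b n * r ^ (n - 1) = (n : ℝ) * (b n * r ^ n) / r := by
          obtain ⟨m, rfl⟩ : ∃ m, n = m + 1 := ⟨n - 1, by omega⟩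
          have : r ^ (m + 1) = r ^ m * r := pow_succ r m
          simp only [Nat.add_sub_cancel]
          field_simp
          ring
        linarith)
    (show t ∈ Ioo (-r) r from ⟨by linarith, hrt⟩)
    (hconv t ht0.le htR)
    (show t ∈ Ioo (-r) r from ⟨by linarith, hrt⟩)
  exact key

theorem psi_zero_eq {b : ℕ → ℝ} : psi b 0 = b 0 := by
  rw [psi]
  rw [tsum_eq_single 0]
  · simp
  · intro n hn
    simp [zero_pow hn]

theorem psi_ge_b0 {b : ℕ → ℝ} {R : ℝ} (hnn : ∀ n, 0 ≤ b n)
    (hconv : ∀ t : ℝ, 0 ≤ t → t < R → Summable fun n => b n * t ^ n)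
    {s : ℝ} (h0 : 0 ≤ s) (hs : s < R) : b 0 ≤ psi b s := by
  have := Summable.le_tsum (hconv s h0 hs) 0 fun m _ => mul_nonneg (hnn m) (pow_nonneg h0 m)
  simpa [psi] using this

theorem phiAux_eq {b : ℕ → ℝ} {R : ℝ} (hnn : ∀ n, 0 ≤ b n)
    (hconv : ∀ t : ℝ, 0 ≤ t → t < R → Summable fun n => b n * t ^ n)
    {s : ℝ} (h0 : 0 ≤ s) (hs : s < R) :
    phiAux b s = ∑' (n : ℕ), ((n : ℝ) - 1) * (b n * s ^ n) := by
  have hmid1 : s < (s + R) / 2 := by linarith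
  have hmid2 : (s + R) / 2 < R := by linarith
  have h1 : Summable fun n => b n * s ^ n := hconv s h0 hs
  have h2 : Summable fun n : ℕ => (n : ℝ) * (b n * s ^ n) :=
    summable_nmul hnn h0 hmid1 (hconv _ (by linarith) hmid2)
  have key : s * psiD b s = ∑' (n : ℕ), (n : ℝ) * (b n * s ^ n) := by
    rw [psiD, ← tsum_mul_left]
    refine tsum_congr fun n => ?_
    cases n with
    | zero => simp
    | succ m =>
      have : s ^ (m + 1) = s ^ m * s := pow_succ s m
      simp only [Nat.add_sub_cancel]
      rw [this]
      ring
  rw [phiAux, key, psi, ← Summable.tsum_sub h2 h1]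
  exact tsum_congr fun n => by ring

theorem summable_phiAux {b : ℕ → ℝ} {R : ℝ} (hnn : ∀ n, 0 ≤ b n)
    (hconv : ∀ t : ℝ, 0 ≤ t → t < R → Summable fun n => b n * t ^ n)
    {s : ℝ} (h0 : 0 ≤ s) (hs : s < R) :
    Summable fun n : ℕ => ((n : ℝ) - 1) * (b n * s ^ n) := by
  have hmid1 : s < (s + R) / 2 := by linarith
  have hmid2 : (s + R) / 2 < R := by linarith
  have h1 : Summable fun n => b n * s ^ n := hconv s h0 hs
  have h2 : Summable fun n : ℕ => (n : ℝ) * (b n * s ^ n) :=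
    summable_nmul hnn h0 hmid1 (hconv _ (by linarith) hmid2)
  exact (h2.sub h1).congr fun n => by ring

theorem phiAux_lt {b : ℕ → ℝ} {R : ℝ} (hnn : ∀ n, 0 ≤ b n)
    (hconv : ∀ t : ℝ, 0 ≤ t → t < R → Summable fun n => b n * t ^ n)
    {n0 : ℕ} (hn02 : 2 ≤ n0) (hbn0 : 0 < b n0)
    {x y : ℝ} (hx : 0 ≤ x) (hxy : x < y) (hy : y < R) :
    phiAux b x < phiAux b y := by
  have hy0 : 0 ≤ y := le_trans hx hxy.le
  rw [phiAux_eq hnn hconv hx (lt_trans hxy hy), phiAux_eq hnn hconv hy0 hy]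
  refine Summable.tsum_lt_tsum (i := n0) (fun n => ?_) ?_
    (summable_phiAux hnn hconv hx (lt_trans hxy hy)) (summable_phiAux hnn hconv hy0 hy)
  · rcases Nat.eq_zero_or_pos n with hn | hn
    · subst hn; simp
    · have hc : (0 : ℝ) ≤ (n : ℝ) - 1 := by
        have : (1 : ℝ) ≤ (n : ℝ) := by exact_mod_cast hn
        linarith
      refine mul_le_mul_of_nonneg_left ?_ hc
      exact mul_le_mul_of_nonneg_left (pow_le_pow_left₀ hx hxy.le n) (hnn n)
  · have hc : (0 : ℝ) < (n0 : ℝ) - 1 := by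
      have : (2 : ℝ) ≤ (n0 : ℝ) := by exact_mod_cast hn02
      linarith
    have hpow : x ^ n0 < y ^ n0 := pow_lt_pow_left₀ hxy hx (by omega)
    have : b n0 * x ^ n0 < b n0 * y ^ n0 := by
      exact mul_lt_mul_of_pos_left hpow hbn0
    exact mul_lt_mul_of_pos_left this hc

theorem algebra_key {q P A B t : ℝ} (ht : t ≠ 0) (hq : q ≠ 0) (hP : P ≠ 0)
    (hB : B ≠ 0) :
    q / t * ((-A / P) / (-B / (q * P)) - 1) =
      ((B / (t * q) ^ 2)⁻¹ * (A / t ^ 2) * t - t * q * 1) / t ^ 2 := by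
  field_simp

theorem stmt_18
    (b : ℕ → ℝ) (R : ℝ) (hR : 0 < R)
    (hnn : ∀ n, 0 ≤ b n) (hb0 : 0 < b 0)
    (hnc : ∃ n, 1 ≤ n ∧ b n ≠ 0)
    (hconv : ∀ t : ℝ, 0 ≤ t → t < R → Summable fun n => b n * t ^ n)
    (τ : ℝ) (hτ : τ ∈ Set.Ioo 0 R) (happex : mean b τ = 1) :
    (∀ t ∈ Set.Ioo 0 R, t ≠ τ →
      HasDerivAt (extq b)
        (extq b t / t * ((1 - mean b t) / (1 - mean b (t * extq b t)) - 1)) t) ∧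
    (∀ t ∈ Set.Ioo τ R, deriv (extq b) t < 0) := by
  obtain ⟨hτ0, hτR⟩ := hτ
  have hψpos : ∀ s : ℝ, 0 ≤ s → s < R → 0 < psi b s := fun s h0 hs =>
    lt_of_lt_of_le hb0 (psi_ge_b0 hnn hconv h0 hs)
  have hder : ∀ s ∈ Ioo (0 : ℝ) R, deriv (psi b) s = psiD b s := fun s hs =>
    (hasDerivAt_psi hnn hconv hs).deriv
  -- mean in terms of phiAux
  have hms : ∀ s ∈ Ioo (0 : ℝ) R, 1 - mean b s = -(phiAux b s) / psi b s := by
    intro s hs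
    have hψ : psi b s ≠ 0 := ne_of_gt (hψpos s hs.1.le hs.2)
    rw [mean, hder s hs, phiAux]
    field_simp
    ring
  have hψτ : 0 < psi b τ := hψpos τ hτ0.le hτR
  have hphiτ : phiAux b τ = 0 := by
    have h1 : mean b τ = τ * psiD b τ / psi b τ := by rw [mean, hder τ ⟨hτ0, hτR⟩]
    have h2 : τ * psiD b τ / psi b τ = 1 := h1 ▸ happex
    have h3 : τ * psiD b τ = psi b τ := by
      field_simp at h2
      exact h2
    rw [phiAux, h3, sub_self]
  have hn2 : ∃ n, 2 ≤ n ∧ 0 < b n := by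
    by_contra hcon
    push_neg at hcon
    have hz : ∀ n, 2 ≤ n → b n = 0 := fun n hn => le_antisymm (hcon n hn) (hnn n)
    have hval : phiAux b τ = -(b 0) := by
      rw [phiAux_eq hnn hconv hτ0.le hτR]
      rw [tsum_eq_single 0]
      · simp
      · intro n hn
        match n, hn with
        | 1, _ => norm_num
        | (m + 2), _ =>
          rw [hz (m + 2) (by omega)]
          ring
    rw [hphiτ] at hval
    linarith
  obtain ⟨n0, hn02, hbn0⟩ := hn2
  have hphi_lt : ∀ {x y : ℝ}, 0 ≤ x → x < y → y < R → phiAux b x < phiAux b y :=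
    fun hx hxy hy => phiAux_lt hnn hconv hn02 hbn0 hx hxy hy
  have hphi_neg : ∀ s ∈ Ioo (0 : ℝ) τ, phiAux b s < 0 := by
    intro s hs
    have := hphi_lt hs.1.le hs.2 hτR
    linarith [hphiτ]
  have hphi_pos : ∀ s ∈ Ioo τ R, 0 < phiAux b s := by
    intro s hs
    have := hphi_lt hτ0.le hs.1 hs.2
    linarith [hphiτ]
  have hhd : ∀ s ∈ Ioo (0 : ℝ) R, HasDerivAt (hAux b) (phiAux b s / s ^ 2) s := by
    intro s hs
    have h1 := (hasDerivAt_psi hnn hconv hs).div (hasDerivAt_id s) (ne_of_gt hs.1)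
    convert h1 using 1
    · rfl
    · rfl
    · rfl
    rw [phiAux]
    congr 1
    simp
    ring
  have hcont : ∀ s ∈ Ioo (0 : ℝ) R, ContinuousAt (hAux b) s := fun s hs =>
    (hhd s hs).continuousAt
  have hanti : StrictAntiOn (hAux b) (Ioc 0 τ) := by
    apply strictAntiOn_of_deriv_neg (convex_Ioc 0 τ)
    · intro s hs
      exact (hcont s ⟨hs.1, lt_of_le_of_lt hs.2 hτR⟩).continuousWithinAt
    · intro s hs
      rw [interior_Ioc] at hs
      rw [(hhd s ⟨hs.1, hs.2.trans hτR⟩).deriv]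
      exact div_neg_of_neg_of_pos (hphi_neg s hs) (pow_pos hs.1 2)
  have hmono : StrictMonoOn (hAux b) (Ico τ R) := by
    apply strictMonoOn_of_deriv_pos (convex_Ico τ R)
    · intro s hs
      exact (hcont s ⟨hτ0.trans_le hs.1, hs.2⟩).continuousWithinAt
    · intro s hs
      rw [interior_Ico] at hs
      have hs0 : 0 < s := hτ0.trans hs.1
      rw [(hhd s ⟨hs0, hs.2⟩).deriv]
      exact div_pos (hphi_pos s hs) (pow_pos hs0 2)
  -- basic facts about the fixed-point set
  have hS1 : ∀ t : ℝ, (1 : ℝ) ∈ {x : ℝ | 0 ≤ x ∧ psi b (t * x) = x * psi b t} := by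
    intro t
    refine ⟨zero_le_one, ?_⟩
    rw [mul_one, one_mul]
  have hSpos : ∀ t x : ℝ, 0 ≤ x ∧ psi b (t * x) = x * psi b t → x ≠ 0 := by
    intro t x hx h0
    subst h0
    rw [mul_zero, zero_mul, psi_zero_eq] at hx
    exact absurd hx.2 (ne_of_gt hb0)
  have hSh : ∀ t x : ℝ, 0 < t → 0 < x → psi b (t * x) = x * psi b t →
      hAux b (t * x) = hAux b t := by
    intro t x ht hx heq
    rw [hAux, hAux, heq, mul_comm t x, mul_div_mul_left _ _ (ne_of_gt hx)]
  -- extinction probability is 1 below the apex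
  have hext1 : ∀ t : ℝ, 0 < t → t < τ → extq b t = 1 := by
    intro t ht htτ
    have hleast : IsLeast {x : ℝ | 0 ≤ x ∧ psi b (t * x) = x * psi b t} 1 := by
      constructor
      · exact hS1 t
      · intro x hx
        by_contra hx1
        push_neg at hx1
        have hxpos : 0 < x := (hx.1.lt_of_ne (Ne.symm (hSpos t x hx)))
        have hh : hAux b (t * x) = hAux b t := hSh t x ht hxpos hx.2
        have h1 : t * x ∈ Ioc (0 : ℝ) τ := by
          constructor
          · positivity
          · nlinarith
        have h2 : t ∈ Ioc (0 : ℝ) τ := ⟨ht, le_of_lt htτ⟩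
        have heq := hanti.injOn h1 h2 hh
        have hx1' : x = 1 := mul_left_cancel₀ (ne_of_gt ht) (by rw [heq, mul_one])
        linarith
    exact hleast.csInf_eq
  -- existence of the conjugate point below the apex
  have hexist : ∀ t : ℝ, τ < t → t < R → ∃ s, s ∈ Ioo (0 : ℝ) τ ∧ hAux b s = hAux b t := by
    intro t htτ htR
    have ht0 : 0 < t := hτ0.trans htτ
    have hc : 0 < hAux b t := div_pos (hψpos t ht0.le htR) ht0
    set c := hAux b t with hcdef
    set s1 := min (τ / 2) (b 0 / c) with hs1def
    have hs10 : 0 < s1 := lt_min (by linarith) (div_pos hb0 hc)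
    have hs1τ : s1 < τ := lt_of_le_of_lt (min_le_left _ _) (by linarith)
    have hhs1 : c ≤ hAux b s1 := by
      have hb0le : b 0 ≤ psi b s1 := psi_ge_b0 hnn hconv hs10.le (hs1τ.trans hτR)
      have h2 : c * s1 ≤ b 0 := by
        have hmr : s1 ≤ b 0 / c := min_le_right _ _
        calc c * s1 ≤ c * (b 0 / c) := mul_le_mul_of_nonneg_left hmr hc.le
          _ = b 0 := by field_simp
      rw [hAux, le_div_iff₀ hs10]
      linarith
    have hhτ : hAux b τ < c := hmono ⟨le_refl τ, hτR⟩ ⟨htτ.le, htR⟩ htτ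
    have hcont' : ContinuousOn (hAux b) (Icc s1 τ) := fun s hs =>
      (hcont s ⟨lt_of_lt_of_le hs10 hs.1, lt_of_le_of_lt hs.2 hτR⟩).continuousWithinAt
    have hIVT := intermediate_value_Icc' (le_of_lt hs1τ) hcont'
    have hmem : c ∈ Icc (hAux b τ) (hAux b s1) := ⟨hhτ.le, hhs1⟩
    obtain ⟨s, hsmem, hseq⟩ := hIVT hmem
    refine ⟨s, ⟨lt_of_lt_of_le hs10 hsmem.1, ?_⟩, hseq⟩
    rcases lt_or_eq_of_le hsmem.2 with h | h
    · exact h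
    · exfalso
      rw [h] at hseq
      exact absurd hseq (ne_of_lt hhτ)
  -- structure of the extinction probability above the apex
  have hspec : ∀ t : ℝ, τ < t → t < R →
      0 < extq b t ∧ extq b t < 1 ∧ t * extq b t ∈ Ioo (0 : ℝ) τ ∧
        hAux b (t * extq b t) = hAux b t ∧
        psi b (t * extq b t) = extq b t * psi b t := by
    intro t htτ htR
    have ht0 : 0 < t := hτ0.trans htτ
    obtain ⟨s, hs, hsh⟩ := hexist t htτ htR
    have hts : t * (s / t) = s := by field_simp
    have hmemS : s / t ∈ {x : ℝ | 0 ≤ x ∧ psi b (t * x) = x * psi b t} := by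
      refine ⟨(div_pos hs.1 ht0).le, ?_⟩
      rw [hts]
      have h1 : psi b s / s = psi b t / t := hsh
      have hs0 : s ≠ 0 := ne_of_gt hs.1
      have ht0' : t ≠ 0 := ne_of_gt ht0
      field_simp at h1 ⊢
      linarith
    have hq : extq b t = s / t := by
      apply IsLeast.csInf_eq
      refine ⟨hmemS, ?_⟩
      intro x hx
      by_contra hlt
      push_neg at hlt
      have hxpos : 0 < x := (hx.1.lt_of_ne (Ne.symm (hSpos t x hx)))
      have htxs : t * x < s := by
        rw [lt_div_iff₀ ht0] at hlt
        nlinarith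
      have hh : hAux b (t * x) = hAux b t := hSh t x ht0 hxpos hx.2
      have h1 : t * x ∈ Ioc (0 : ℝ) τ := ⟨by positivity, le_of_lt (htxs.trans hs.2)⟩
      have h2 : s ∈ Ioc (0 : ℝ) τ := ⟨hs.1, hs.2.le⟩
      have := hanti.injOn h1 h2 (hh.trans hsh.symm)
      exact absurd this (ne_of_lt htxs)
    have hts' : t * extq b t = s := by rw [hq, hts]
    refine ⟨?_, ?_, ?_, ?_, ?_⟩
    · rw [hq]; exact div_pos hs.1 ht0
    · rw [hq, div_lt_one ht0]; exact hs.2.trans htτ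
    · rw [hts']; exact hs
    · rw [hts']; exact hsh
    · have := hmemS.2
      rw [← hq] at this
      exact this
  -- Main differentiability statement
  have hmain : ∀ t ∈ Ioo (0 : ℝ) R, t ≠ τ →
      HasDerivAt (extq b)
        (extq b t / t * ((1 - mean b t) / (1 - mean b (t * extq b t)) - 1)) t := by
    rintro t ⟨ht0, htR⟩ htne
    rcases lt_or_gt_of_ne htne with hlt | hgt
    · -- subcritical case : t < τ
      have hd0 : HasDerivAt (extq b) 0 t := by
        have heq : extq b =ᶠ[𝓝 t] fun _ => (1 : ℝ) := by
          filter_upwards [isOpen_Ioo.mem_nhds (show t ∈ Ioo (0 : ℝ) τ from ⟨ht0, hlt⟩)]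
            with u hu
          exact hext1 u hu.1 hu.2
        exact (hasDerivAt_const t (1 : ℝ)).congr_of_eventuallyEq heq
      have he1 : extq b t = 1 := hext1 t ht0 hlt
      have hmne : 1 - mean b t ≠ 0 := by
        rw [hms t ⟨ht0, htR⟩]
        have h1 := hphi_neg t ⟨ht0, hlt⟩
        have h2 := hψpos t ht0.le htR
        exact ne_of_gt (div_pos (by linarith) h2)
      have hval : extq b t / t * ((1 - mean b t) / (1 - mean b (t * extq b t)) - 1) = 0 := by
        rw [he1, mul_one, div_self hmne]
        ring
      rw [hval]
      exact hd0
    · -- supercritical case : τ < t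
      have ht0' : (0 : ℝ) < t := ht0
      obtain ⟨hq0, hq1, hs0mem, hs0h, hs0psi⟩ := hspec t hgt htR
      set s0 := t * extq b t with hs0def
      set H := Function.invFunOn (hAux b) (Ioo 0 τ) with hHdef
      have hinj : InjOn (hAux b) (Ioo 0 τ) := (hanti.injOn).mono Ioo_subset_Ioc_self
      set y0 := hAux b t with hy0def
      have hy0s0 : hAux b s0 = y0 := hs0h
      have hHy0 : H y0 = s0 := by
        rw [← hy0s0]
        exact hinj.leftInvOn_invFunOn hs0mem
      set ε := min (s0 / 2) ((τ - s0) / 2) with hεdef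
      have hε0 : 0 < ε := lt_min (by linarith [hs0mem.1]) (by linarith [hs0mem.2])
      have hεs0 : ε ≤ s0 / 2 := min_le_left _ _
      have hετ : ε ≤ (τ - s0) / 2 := min_le_right _ _
      have key : ∀ δ : ℝ, 0 < δ → δ ≤ ε →
          ∀ᶠ y in 𝓝 y0, hAux b (H y) = y ∧ |H y - s0| ≤ δ := by
        intro δ hδ0 hδε
        have ha0 : 0 < s0 - δ := by linarith [hs0mem.1]
        have hcτ : s0 + δ < τ := by linarith [hs0mem.2]
        have hIcc : Icc (s0 - δ) (s0 + δ) ⊆ Ioo (0 : ℝ) τ := fun x hx =>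
          ⟨lt_of_lt_of_le ha0 hx.1, lt_of_le_of_lt hx.2 hcτ⟩
        have hc1 : ContinuousOn (hAux b) (Icc (s0 - δ) (s0 + δ)) := fun x hx =>
          (hcont x ⟨lt_of_lt_of_le ha0 hx.1,
            lt_of_le_of_lt hx.2 (hcτ.trans hτR)⟩).continuousWithinAt
        have hmemIoc : ∀ x ∈ Ioo (0 : ℝ) τ, x ∈ Ioc (0 : ℝ) τ := fun x hx =>
          ⟨hx.1, hx.2.le⟩
        have hs0Ioc : s0 ∈ Ioc (0 : ℝ) τ := hmemIoc s0 hs0mem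
        have hlow : hAux b (s0 + δ) < y0 := by
          rw [← hy0s0]
          exact hanti ⟨hs0Ioc.1, hs0Ioc.2⟩ ⟨by linarith, by linarith⟩ (by linarith)
        have hhigh : y0 < hAux b (s0 - δ) := by
          rw [← hy0s0]
          exact hanti ⟨by linarith, by linarith⟩ ⟨hs0Ioc.1, hs0Ioc.2⟩ (by linarith)
        have hIVT := intermediate_value_Icc' (by linarith : s0 - δ ≤ s0 + δ) hc1
        filter_upwards [isOpen_Ioo.mem_nhds
          (show y0 ∈ Ioo (hAux b (s0 + δ)) (hAux b (s0 - δ)) from ⟨hlow, hhigh⟩)] with y hy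
        obtain ⟨x, hxmem, hxeq⟩ := hIVT ⟨hy.1.le, hy.2.le⟩
        have hxIoo : x ∈ Ioo (0 : ℝ) τ := hIcc hxmem
        have hHy : hAux b (H y) = y := Function.invFunOn_eq ⟨x, hxIoo, hxeq⟩
        have hHyx : H y = x :=
          hinj (Function.invFunOn_mem ⟨x, hxIoo, hxeq⟩) hxIoo (by rw [hHy, hxeq])
        refine ⟨hHy, ?_⟩
        rw [hHyx, abs_sub_le_iff]
        constructor
        · linarith [hxmem.2]
        · linarith [hxmem.1]
      have hfg : ∀ᶠ y in 𝓝 y0, hAux b (H y) = y :=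
        (key ε hε0 le_rfl).mono fun y hy => hy.1
      have hHcont : ContinuousAt H y0 := by
        rw [ContinuousAt, hHy0, Metric.tendsto_nhds]
        intro ε' hε'
        have hδ0 : 0 < min ε (ε' / 2) := lt_min hε0 (by linarith)
        filter_upwards [key (min ε (ε' / 2)) hδ0 (min_le_left _ _)] with y hy
        rw [Real.dist_eq]
        calc |H y - s0| ≤ min ε (ε' / 2) := hy.2
          _ ≤ ε' / 2 := min_le_right _ _
          _ < ε' := by linarith
      have hs0R : s0 ∈ Ioo (0 : ℝ) R := ⟨hs0mem.1, hs0mem.2.trans hτR⟩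
      have hD0 : HasDerivAt (hAux b) (phiAux b s0 / s0 ^ 2) s0 := hhd s0 hs0R
      have hD0ne : phiAux b s0 / s0 ^ 2 ≠ 0 :=
        ne_of_lt (div_neg_of_neg_of_pos (hphi_neg s0 hs0mem) (pow_pos hs0mem.1 2))
      have hHd : HasDerivAt H (phiAux b s0 / s0 ^ 2)⁻¹ y0 :=
        HasDerivAt.of_local_left_inverse hHcont (hHy0 ▸ hD0) hD0ne hfg
      have hht : HasDerivAt (hAux b) (phiAux b t / t ^ 2) t := hhd t ⟨ht0, htR⟩
      have hcomp : HasDerivAt (fun u => H (hAux b u))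
          ((phiAux b s0 / s0 ^ 2)⁻¹ * (phiAux b t / t ^ 2)) t :=
        HasDerivAt.comp (h₂ := H) t hHd hht
      have hGd : HasDerivAt (fun u => H (hAux b u) / u)
          (((phiAux b s0 / s0 ^ 2)⁻¹ * (phiAux b t / t ^ 2) * t - H (hAux b t) * 1) / t ^ 2)
          t := hcomp.div (hasDerivAt_id t) (ne_of_gt ht0')
      have hagree : ∀ u ∈ Ioo τ R, extq b u = H (hAux b u) / u := by
        intro u hu
        obtain ⟨hu0, _, humem, huh, _⟩ := hspec u hu.1 hu.2
        have huH : H (hAux b u) = u * extq b u := by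
          have hpre : hAux b (H (hAux b u)) = hAux b u :=
            Function.invFunOn_eq ⟨u * extq b u, humem, huh⟩
          exact hinj (Function.invFunOn_mem ⟨_, humem, huh⟩) humem (by rw [hpre, ← huh])
        rw [huH]
        have hu0' : u ≠ 0 := ne_of_gt (hτ0.trans hu.1)
        field_simp
      have hdext : HasDerivAt (extq b)
          (((phiAux b s0 / s0 ^ 2)⁻¹ * (phiAux b t / t ^ 2) * t - H (hAux b t) * 1) / t ^ 2)
          t := by
        apply hGd.congr_of_eventuallyEq
        filter_upwards [isOpen_Ioo.mem_nhds (show t ∈ Ioo τ R from ⟨hgt, htR⟩)] with u hu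
        exact hagree u hu
      have hHt : H (hAux b t) = s0 := hHy0
      have hval : extq b t / t * ((1 - mean b t) / (1 - mean b (t * extq b t)) - 1) =
          ((phiAux b s0 / s0 ^ 2)⁻¹ * (phiAux b t / t ^ 2) * t - H (hAux b t) * 1) / t ^ 2 := by
        rw [hHt]
        have hP : psi b t ≠ 0 := ne_of_gt (hψpos t ht0.le htR)
        have hQeq : psi b s0 = extq b t * psi b t := hs0psi
        have h1 : 1 - mean b t = -(phiAux b t) / psi b t := hms t ⟨ht0, htR⟩
        have h2 : 1 - mean b s0 = -(phiAux b s0) / psi b s0 := hms s0 hs0R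
        rw [← hs0def, h1, h2, hQeq]
        have hB : phiAux b s0 ≠ 0 := ne_of_lt (hphi_neg s0 hs0mem)
        have := algebra_key (q := extq b t) (P := psi b t) (A := phiAux b t)
          (B := phiAux b s0) (t := t) (ne_of_gt ht0') (ne_of_gt hq0) hP hB
        rw [this, hs0def]
      rw [hval]
      exact hdext
  refine ⟨hmain, ?_⟩
  rintro t ⟨hgt, htR⟩
  have ht0 : 0 < t := hτ0.trans hgt
  have hd := hmain t ⟨ht0, htR⟩ (ne_of_gt hgt)
  rw [hd.deriv]
  obtain ⟨hq0, hq1, hs0mem, _, _⟩ := hspec t hgt htR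
  have hnum : 1 - mean b t < 0 := by
    rw [hms t ⟨ht0, htR⟩]
    have h1 := hphi_pos t ⟨hgt, htR⟩
    have h2 := hψpos t ht0.le htR
    rw [div_neg_iff]
    right
    exact ⟨by linarith, h2⟩
  have hden : 0 < 1 - mean b (t * extq b t) := by
    rw [hms (t * extq b t) ⟨hs0mem.1, hs0mem.2.trans hτR⟩]
    have h1 := hphi_neg (t * extq b t) hs0mem
    have h2 := hψpos (t * extq b t) hs0mem.1.le (hs0mem.2.trans hτR)
    exact div_pos (by linarith) h2
  have hratio : (1 - mean b t) / (1 - mean b (t * extq b t)) < 0 :=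
    div_neg_of_neg_of_pos hnum hden
  have hsub : (1 - mean b t) / (1 - mean b (t * extq b t)) - 1 < 0 := by linarith
  exact mul_neg_of_pos_of_neg (div_pos hq0 ht0) hsub
end

section
/- Let ψ ∈ 𝒦* with apex τ. The extinction probability q has a jump in its derivative at t = τ: lim_{t↑τ} (q(t)-1)/(t-τ) = 0 and lim_{t↓τ} (q(t)-1)/(t-τ) = -2/τ. -/
open Set Filter Topology

noncomputable def sP1 (b : ℕ → ℝ) (t : ℝ) : ℝ := ∑' n : ℕ, (n : ℝ) * b n * t ^ (n - 1)
noncomputable def sP2 (b : ℕ → ℝ) (t : ℝ) : ℝ :=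
  ∑' n : ℕ, (n : ℝ) * b n * ((n - 1 : ℕ) : ℝ) * t ^ (n - 2)
noncomputable def sP3 (b : ℕ → ℝ) (t : ℝ) : ℝ :=
  ∑' n : ℕ, (n : ℝ) * b n * ((n - 1 : ℕ) : ℝ) * ((n - 2 : ℕ) : ℝ) * t ^ (n - 3)

lemma aux_summable {b : ℕ → ℝ} {R : ℝ} (hnn : ∀ n, 0 ≤ b n)
    (hconv : ∀ t : ℝ, 0 ≤ t → t < R → Summable fun n : ℕ => b n * t ^ n)
    (k : ℕ) {a : ℝ} (ha : 0 ≤ a) (haR : a < R) :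
    Summable fun n : ℕ => (n : ℝ) ^ k * (b n * a ^ n) := by
  set a' := (a + R) / 2 with ha'def
  have ha1 : a < a' := by simp only [ha'def]; linarith
  have ha2 : a' < R := by simp only [ha'def]; linarith
  have ha0 : 0 < a' := lt_of_le_of_lt ha ha1
  have hs : Summable fun n : ℕ => b n * a' ^ n := hconv a' ha0.le ha2
  set x := a / a' with hxdef
  have hx0 : 0 ≤ x := div_nonneg ha ha0.le
  have hx1 : x < 1 := (div_lt_one ha0).2 ha1
  obtain ⟨C, hC⟩ := (tendsto_pow_const_mul_const_pow_of_lt_one k hx0 hx1).bddAbove_range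
  have key : ∀ n : ℕ, (n : ℝ) ^ k * (b n * a ^ n) ≤ C * (b n * a' ^ n) := by
    intro n
    have hxa : a ^ n = x ^ n * a' ^ n := by
      rw [← mul_pow, hxdef, div_mul_cancel₀ _ ha0.ne']
    have hCn : (n : ℝ) ^ k * x ^ n ≤ C := hC ⟨n, rfl⟩
    calc (n : ℝ) ^ k * (b n * a ^ n) = ((n : ℝ) ^ k * x ^ n) * (b n * a' ^ n) := by
          rw [hxa]; ring
      _ ≤ C * (b n * a' ^ n) :=
          mul_le_mul_of_nonneg_right hCn (mul_nonneg (hnn n) (pow_nonneg ha0.le n))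
  exact Summable.of_nonneg_of_le (fun n : ℕ => mul_nonneg (by positivity) (mul_nonneg (hnn n) (pow_nonneg ha n))) key (hs.mul_left C)

section derivs

variable {b : ℕ → ℝ} {R : ℝ} (hnn : ∀ n, 0 ≤ b n)
  (hconv : ∀ t : ℝ, 0 ≤ t → t < R → Summable fun n : ℕ => b n * t ^ n)
  {r : ℝ} (hr0 : 0 < r) (hrR : r < R)

-- summability of the bound series
include hnn hconv hr0 hrR

lemma sum_u1 : Summable fun n : ℕ => (n : ℝ) * b n * r ^ (n - 1) := by
  apply Summable.of_nonneg_of_le (f := fun n : ℕ => (1 / r) * ((n : ℝ) ^ 1 * (b n * r ^ n)))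
    (fun n : ℕ => by have := hnn n; positivity) _ ((aux_summable hnn hconv 1 hr0.le hrR).mul_left (1 / r))
  intro n
  match n with
  | 0 => simp
  | (m + 1) =>
    have : (1 / r) * ((((m : ℕ) + 1 : ℕ) : ℝ) ^ 1 * (b (m + 1) * r ^ (m + 1))) =
        ((m + 1 : ℕ) : ℝ) * b (m + 1) * r ^ m := by
      rw [pow_succ]; field_simp; ring
    beta_reduce
    rw [show (m + 1) - 1 = m from rfl, this]

lemma sum_u2 : Summable fun n : ℕ => (n : ℝ) * b n * ((n - 1 : ℕ) : ℝ) * r ^ (n - 2) := by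
  apply Summable.of_nonneg_of_le (f := fun n : ℕ => (1 / r ^ 2) * ((n : ℝ) ^ 2 * (b n * r ^ n)))
    (fun n : ℕ => by have := hnn n; positivity) _ ((aux_summable hnn hconv 2 hr0.le hrR).mul_left (1 / r ^ 2))
  intro n
  match n with
  | 0 => simpa using by have := hnn 0; positivity
  | 1 => simpa using by have := hnn 1; positivity
  | (m + 2) =>
    have h1 : ((m + 2) : ℕ) - 1 = m + 1 := rfl
    have h2 : ((m + 2) : ℕ) - 2 = m := rfl
    beta_reduce
    rw [h1, h2]
    have hR : (1 / r ^ 2) * ((((m + 2 : ℕ)) : ℝ) ^ 2 * (b (m + 2) * r ^ (m + 2))) =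
        (((m + 2 : ℕ)) : ℝ) ^ 2 * b (m + 2) * r ^ m := by
      rw [pow_add]; field_simp
    rw [hR]
    have : (((m + 2 : ℕ)) : ℝ) * b (m + 2) * (((m + 1 : ℕ)) : ℝ) =
        ((((m + 2 : ℕ)) : ℝ) * (((m + 1 : ℕ)) : ℝ)) * b (m + 2) := by ring
    rw [this]
    apply mul_le_mul_of_nonneg_right _ (pow_nonneg hr0.le _)
    apply mul_le_mul_of_nonneg_right _ (hnn _)
    push_cast; nlinarith [Nat.cast_nonneg (α := ℝ) m]

lemma sum_u3 : Summable fun n : ℕ =>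
    (n : ℝ) * b n * ((n - 1 : ℕ) : ℝ) * ((n - 2 : ℕ) : ℝ) * r ^ (n - 3) := by
  apply Summable.of_nonneg_of_le (f := fun n : ℕ => (1 / r ^ 3) * ((n : ℝ) ^ 3 * (b n * r ^ n)))
    (fun n : ℕ => by have := hnn n; positivity) _ ((aux_summable hnn hconv 3 hr0.le hrR).mul_left (1 / r ^ 3))
  intro n
  match n with
  | 0 => simpa using by have := hnn 0; positivity
  | 1 => simpa using by have := hnn 1; positivity
  | 2 => simpa using by have := hnn 2; positivity
  | (m + 3) =>
    have h1 : ((m + 3) : ℕ) - 1 = m + 2 := rfl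
    have h2 : ((m + 3) : ℕ) - 2 = m + 1 := rfl
    have h3 : ((m + 3) : ℕ) - 3 = m := rfl
    beta_reduce
    rw [h1, h2, h3]
    have hR : (1 / r ^ 3) * ((((m + 3 : ℕ)) : ℝ) ^ 3 * (b (m + 3) * r ^ (m + 3))) =
        (((m + 3 : ℕ)) : ℝ) ^ 3 * b (m + 3) * r ^ m := by
      rw [pow_add]; field_simp
    rw [hR]
    have : (((m + 3 : ℕ)) : ℝ) * b (m + 3) * (((m + 2 : ℕ)) : ℝ) * (((m + 1 : ℕ)) : ℝ) =
        ((((m + 3 : ℕ)) : ℝ) * (((m + 2 : ℕ)) : ℝ) * (((m + 1 : ℕ)) : ℝ)) * b (m + 3) := by ring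
    rw [this]
    apply mul_le_mul_of_nonneg_right _ (pow_nonneg hr0.le _)
    apply mul_le_mul_of_nonneg_right _ (hnn _)
    push_cast; nlinarith [Nat.cast_nonneg (α := ℝ) m]

lemma hasDerivAt_psi_s19 {y : ℝ} (hy : y ∈ Ioo (-r) r) : HasDerivAt (psi b) (sP1 b y) y := by
  have habs : ∀ (z : ℝ), z ∈ Ioo (-r) r → |z| < r := by
    intro z hz; exact abs_lt.2 ⟨by linarith [hz.1], hz.2⟩
  have hbound : ∀ (n : ℕ) (z : ℝ), z ∈ Ioo (-r) r →
      ‖(n : ℝ) * b n * z ^ (n - 1)‖ ≤ (n : ℝ) * b n * r ^ (n - 1) := by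
    intro n z hz
    rw [Real.norm_eq_abs, abs_mul, abs_mul, abs_pow, abs_of_nonneg (Nat.cast_nonneg n),
      abs_of_nonneg (hnn n)]
    exact mul_le_mul_of_nonneg_left
      (pow_le_pow_left₀ (abs_nonneg z) (habs z hz).le _)
      (mul_nonneg (Nat.cast_nonneg n) (hnn n))
  have h0 : (0 : ℝ) ∈ Ioo (-r) r := ⟨by linarith, hr0⟩
  exact hasDerivAt_tsum_of_isPreconnected (sum_u1 hnn hconv hr0 hrR) isOpen_Ioo
    (convex_Ioo _ _).isPreconnected
    (fun n z _ => by
      simpa using (hasDerivAt_pow n z).const_mul (b n) |>.congr_deriv (by ring))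
    (fun n z hz => hbound n z hz) h0 (hconv 0 le_rfl (hr0.trans hrR)) hy


lemma hasDerivAt_sP1 {y : ℝ} (hy : y ∈ Ioo (-r) r) : HasDerivAt (sP1 b) (sP2 b y) y := by
  have habs : ∀ (z : ℝ), z ∈ Ioo (-r) r → |z| < r := by
    intro z hz; exact abs_lt.2 ⟨by linarith [hz.1], hz.2⟩
  have hbound : ∀ (n : ℕ) (z : ℝ), z ∈ Ioo (-r) r →
      ‖(n : ℝ) * b n * ((n - 1 : ℕ) : ℝ) * z ^ (n - 2)‖ ≤
        (n : ℝ) * b n * ((n - 1 : ℕ) : ℝ) * r ^ (n - 2) := by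
    intro n z hz
    rw [Real.norm_eq_abs, abs_mul, abs_mul, abs_mul, abs_pow,
      abs_of_nonneg (Nat.cast_nonneg n), abs_of_nonneg (hnn n),
      abs_of_nonneg (Nat.cast_nonneg (n-1))]
    exact mul_le_mul_of_nonneg_left
      (pow_le_pow_left₀ (abs_nonneg z) (habs z hz).le _)
      (mul_nonneg (mul_nonneg (Nat.cast_nonneg n) (hnn n)) (Nat.cast_nonneg _))
  have h0 : (0 : ℝ) ∈ Ioo (-r) r := ⟨by linarith, hr0⟩
  have hg0 : Summable (fun n : ℕ => (n : ℝ) * b n * (0 : ℝ) ^ (n - 1)) := by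
    apply Summable.of_norm_bounded (sum_u1 hnn hconv hr0 hrR)
    intro n
    rw [Real.norm_eq_abs, abs_mul, abs_mul, abs_pow,
      abs_of_nonneg (Nat.cast_nonneg n), abs_of_nonneg (hnn n)]
    exact mul_le_mul_of_nonneg_left
      (pow_le_pow_left₀ (abs_nonneg 0) (by rw [abs_zero]; exact hr0.le) _)
      (mul_nonneg (Nat.cast_nonneg n) (hnn n))
  exact hasDerivAt_tsum_of_isPreconnected (sum_u2 hnn hconv hr0 hrR) isOpen_Ioo
    (convex_Ioo _ _).isPreconnected
    (fun n z _ => by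
      have h := (hasDerivAt_pow (n - 1) z).const_mul ((n : ℝ) * b n)
      have he : n - 1 - 1 = n - 2 := by omega
      rw [he] at h
      exact h.congr_deriv (by ring))
    (fun n z hz => hbound n z hz) h0 hg0 hy

lemma hasDerivAt_sP2 {y : ℝ} (hy : y ∈ Ioo (-r) r) : HasDerivAt (sP2 b) (sP3 b y) y := by
  have habs : ∀ (z : ℝ), z ∈ Ioo (-r) r → |z| < r := by
    intro z hz; exact abs_lt.2 ⟨by linarith [hz.1], hz.2⟩
  have hbound : ∀ (n : ℕ) (z : ℝ), z ∈ Ioo (-r) r →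
      ‖(n : ℝ) * b n * ((n - 1 : ℕ) : ℝ) * ((n - 2 : ℕ) : ℝ) * z ^ (n - 3)‖ ≤
        (n : ℝ) * b n * ((n - 1 : ℕ) : ℝ) * ((n - 2 : ℕ) : ℝ) * r ^ (n - 3) := by
    intro n z hz
    rw [Real.norm_eq_abs, abs_mul, abs_mul, abs_mul, abs_mul, abs_pow,
      abs_of_nonneg (Nat.cast_nonneg n), abs_of_nonneg (hnn n),
      abs_of_nonneg (Nat.cast_nonneg (n-1)), abs_of_nonneg (Nat.cast_nonneg (n-2))]
    exact mul_le_mul_of_nonneg_left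
      (pow_le_pow_left₀ (abs_nonneg z) (habs z hz).le _)
      (mul_nonneg (mul_nonneg (mul_nonneg (Nat.cast_nonneg n) (hnn n)) (Nat.cast_nonneg _))
        (Nat.cast_nonneg _))
  have h0 : (0 : ℝ) ∈ Ioo (-r) r := ⟨by linarith, hr0⟩
  have hg0 : Summable (fun n : ℕ => (n : ℝ) * b n * ((n - 1 : ℕ) : ℝ) * (0 : ℝ) ^ (n - 2)) := by
    apply Summable.of_norm_bounded (sum_u2 hnn hconv hr0 hrR)
    intro n
    rw [Real.norm_eq_abs, abs_mul, abs_mul, abs_mul, abs_pow,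
      abs_of_nonneg (Nat.cast_nonneg n), abs_of_nonneg (hnn n),
      abs_of_nonneg (Nat.cast_nonneg (n-1))]
    exact mul_le_mul_of_nonneg_left
      (pow_le_pow_left₀ (abs_nonneg 0) (by rw [abs_zero]; exact hr0.le) _)
      (mul_nonneg (mul_nonneg (Nat.cast_nonneg n) (hnn n)) (Nat.cast_nonneg _))
  exact hasDerivAt_tsum_of_isPreconnected (sum_u3 hnn hconv hr0 hrR) isOpen_Ioo
    (convex_Ioo _ _).isPreconnected
    (fun n z _ => by
      have h := (hasDerivAt_pow (n - 2) z).const_mul ((n : ℝ) * b n * ((n - 1 : ℕ) : ℝ))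
      have he : n - 2 - 1 = n - 3 := by omega
      rw [he] at h
      exact h.congr_deriv (by ring))
    (fun n z hz => hbound n z hz) h0 hg0 hy

end derivs

set_option maxHeartbeats 1600000

theorem stmt_19
    (b : ℕ → ℝ) (R : ℝ) (hR : 0 < R)
    (hnn : ∀ n, 0 ≤ b n) (hb0 : 0 < b 0)
    (hnc : ∃ n, 1 ≤ n ∧ b n ≠ 0)
    (hconv : ∀ t : ℝ, 0 ≤ t → t < R → Summable fun n => b n * t ^ n)
    (τ : ℝ) (hτ : τ ∈ Set.Ioo 0 R) (happex : mean b τ = 1) :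
    Filter.Tendsto (fun t => (extq b t - 1) / (t - τ))
      (nhdsWithin τ (Set.Iio τ)) (nhds 0) ∧
    Filter.Tendsto (fun t => (extq b t - 1) / (t - τ))
      (nhdsWithin τ (Set.Ioi τ)) (nhds (-2 / τ)) := by
  obtain ⟨hτ0, hτR⟩ := hτ
  set r : ℝ := (τ + R) / 2 with hrdef
  have hτr : τ < r := by simp only [hrdef]; linarith
  have hrR : r < R := by simp only [hrdef]; linarith
  have hr0 : 0 < r := hτ0.trans hτr
  have hmem_s : ∀ {y : ℝ}, 0 ≤ y → y < r → y ∈ Ioo (-r) r := fun h1 h2 => ⟨by linarith, h2⟩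
  have hP : ∀ y ∈ Ioo (-r) r, HasDerivAt (psi b) (sP1 b y) y :=
    fun y hy => hasDerivAt_psi_s19 hnn hconv hr0 hrR hy
  have hP1 : ∀ y ∈ Ioo (-r) r, HasDerivAt (sP1 b) (sP2 b y) y :=
    fun y hy => hasDerivAt_sP1 hnn hconv hr0 hrR hy
  have hP2 : ∀ y ∈ Ioo (-r) r, HasDerivAt (sP2 b) (sP3 b y) y :=
    fun y hy => hasDerivAt_sP2 hnn hconv hr0 hrR hy
  -- positivity of psi
  have hpsi_pos : ∀ y : ℝ, 0 ≤ y → y < R → 0 < psi b y := by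
    intro y h1 h2
    have hsm := hconv y h1 h2
    have hle : b 0 * y ^ 0 ≤ psi b y :=
      Summable.le_tsum hsm 0 (fun j _ => mul_nonneg (hnn j) (pow_nonneg h1 j))
    simpa using lt_of_lt_of_le (by simpa using hb0) hle
  have hpsi0 : psi b 0 = b 0 := by
    have : psi b 0 = ∑' n : ℕ, b n * (0:ℝ) ^ n := rfl
    rw [this, tsum_eq_single 0 (fun n hn => by rw [zero_pow hn, mul_zero])]
    simp
  have hsP1_nonneg : ∀ y : ℝ, 0 ≤ y → 0 ≤ sP1 b y := fun y hy =>
    tsum_nonneg (fun n => mul_nonneg (mul_nonneg (Nat.cast_nonneg n) (hnn n)) (pow_nonneg hy _))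
  -- existence of an index ≥ 2 with positive coefficient
  have hn2 : ∃ n, 2 ≤ n ∧ 0 < b n := by
    by_contra hcon
    push_neg at hcon
    have hz : ∀ n, 2 ≤ n → b n = 0 := fun n hn => le_antisymm (hcon n hn) (hnn n)
    have hpsieq : ∀ t : ℝ, psi b t = b 0 + b 1 * t := by
      intro t
      have h1 : psi b t = ∑ n ∈ Finset.range 2, b n * t ^ n := by
        apply tsum_eq_sum
        intro n hn
        rw [hz n (by simp at hn; omega), zero_mul]
      rw [h1]
      simp [Finset.sum_range_succ]
    have hd : deriv (psi b) τ = b 1 := by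
      have h : HasDerivAt (fun t : ℝ => b 0 + b 1 * t) (b 1) τ := by
        simpa using ((hasDerivAt_id τ).const_mul (b 1)).const_add (b 0)
      have heq : psi b = fun t : ℝ => b 0 + b 1 * t := funext hpsieq
      rw [heq]
      exact h.deriv
    have hpos : 0 < psi b τ := hpsi_pos τ hτ0.le hτR
    rw [mean, hd] at happex
    have h2 : τ * b 1 = psi b τ := (div_eq_one_iff_eq hpos.ne').1 happex
    rw [hpsieq τ] at h2
    linarith
  obtain ⟨n2, hn22, hn2pos⟩ := hn2
  -- summability of the second-derivative series at nonneg points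
  have hsm2 : ∀ y : ℝ, y ∈ Ioo (-r) r →
      Summable (fun n : ℕ => (n : ℝ) * b n * ((n - 1 : ℕ) : ℝ) * y ^ (n - 2)) := by
    intro y hy
    apply Summable.of_norm_bounded (sum_u2 hnn hconv hr0 hrR)
    intro n
    rw [Real.norm_eq_abs, abs_mul, abs_mul, abs_mul, abs_pow,
      abs_of_nonneg (Nat.cast_nonneg n), abs_of_nonneg (hnn n),
      abs_of_nonneg (Nat.cast_nonneg (n - 1))]
    have habs : |y| < r := abs_lt.2 ⟨by linarith [hy.1], hy.2⟩
    exact mul_le_mul_of_nonneg_left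
      (pow_le_pow_left₀ (abs_nonneg y) habs.le _)
      (mul_nonneg (mul_nonneg (Nat.cast_nonneg n) (hnn n)) (Nat.cast_nonneg _))
  -- positivity of sP2 on (0, r)
  have hsP2_pos : ∀ y : ℝ, 0 < y → y < r → 0 < sP2 b y := by
    intro y h1 h2
    have hsm := hsm2 y (hmem_s h1.le h2)
    have hterm : (0:ℝ) < (n2 : ℝ) * b n2 * ((n2 - 1 : ℕ) : ℝ) * y ^ (n2 - 2) := by
      apply mul_pos (mul_pos (mul_pos _ hn2pos) _) (pow_pos h1 _)
      · exact_mod_cast (by omega : 0 < n2)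
      · exact_mod_cast (by omega : 0 < n2 - 1)
    have hle : (n2 : ℝ) * b n2 * ((n2 - 1 : ℕ) : ℝ) * y ^ (n2 - 2) ≤ sP2 b y :=
      Summable.le_tsum hsm n2 (fun j _ =>
        mul_nonneg (mul_nonneg (mul_nonneg (Nat.cast_nonneg j) (hnn j)) (Nat.cast_nonneg _))
          (pow_nonneg h1.le _))
    exact lt_of_lt_of_le hterm hle
  -- the function gg y = psi y - y * sP1 y
  set gg : ℝ → ℝ := fun y => psi b y - y * sP1 b y with hggdef
  have hGderiv : ∀ y ∈ Ioo (-r) r, HasDerivAt gg (-(y * sP2 b y)) y := by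
    intro y hy
    have h := (hP y hy).sub ((hasDerivAt_id y).mul (hP1 y hy))
    exact h.congr_deriv (by simp)
  have hGτ : gg τ = 0 := by
    have hd := (hP τ (hmem_s hτ0.le hτr)).deriv
    rw [mean, hd] at happex
    have h2 : τ * sP1 b τ = psi b τ := (div_eq_one_iff_eq (hpsi_pos τ hτ0.le hτR).ne').1 happex
    simp only [hggdef]
    linarith
  have hGcont : ContinuousOn gg (Ico 0 r) := fun y hy =>
    ((hGderiv y (hmem_s hy.1 hy.2)).continuousAt).continuousWithinAt
  have hGanti : StrictAntiOn gg (Ico 0 r) := by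
    apply strictAntiOn_of_deriv_neg (convex_Ico 0 r) hGcont
    intro y hy
    rw [interior_Ico] at hy
    rw [(hGderiv y (hmem_s hy.1.le hy.2)).deriv]
    have := mul_pos hy.1 (hsP2_pos y hy.1 hy.2)
    linarith
  have hsP1cont : ContinuousOn (sP1 b) (Ico 0 r) := fun y hy =>
    ((hP1 y (hmem_s hy.1 hy.2)).continuousAt).continuousWithinAt
  have hsP1mono : StrictMonoOn (sP1 b) (Ico 0 r) := by
    apply strictMonoOn_of_deriv_pos (convex_Ico 0 r) hsP1cont
    intro y hy
    rw [interior_Ico] at hy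
    rw [(hP1 y (hmem_s hy.1.le hy.2)).deriv]
    exact hsP2_pos y hy.1 hy.2
  -- derivative of x ↦ psi(t x) - x psi(t)
  have hφd : ∀ t : ℝ, 0 < t → t < r → ∀ x : ℝ, 0 ≤ x → x ≤ 1 →
      HasDerivAt (fun y => psi b (t * y) - y * psi b t) (t * sP1 b (t * x) - psi b t) x := by
    intro t ht1 ht2 x hx1 hx2
    have htx : t * x ∈ Ioo (-r) r := ⟨by nlinarith, by nlinarith⟩
    have h1 : HasDerivAt (fun y : ℝ => psi b (t * y)) (sP1 b (t * x) * t) x := by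
      exact (hP (t * x) htx).comp x (by simpa using (hasDerivAt_id x).const_mul t)
    have h2 : HasDerivAt (fun y : ℝ => y * psi b t) (psi b t) x := by
      simpa using (hasDerivAt_id x).mul_const (psi b t)
    exact (h1.sub h2).congr_deriv (by ring)
  have hφdd : ∀ t : ℝ, 0 < t → t < r → ∀ x : ℝ, 0 ≤ x → x ≤ 1 →
      HasDerivAt (fun y => t * sP1 b (t * y) - psi b t) (t ^ 2 * sP2 b (t * x)) x := by
    intro t ht1 ht2 x hx1 hx2
    have htx : t * x ∈ Ioo (-r) r := ⟨by nlinarith, by nlinarith⟩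
    have h1 : HasDerivAt (fun y : ℝ => sP1 b (t * y)) (sP2 b (t * x) * t) x := by
      exact (hP1 (t * x) htx).comp x (by simpa using (hasDerivAt_id x).const_mul t)
    exact ((h1.const_mul t).sub_const (psi b t)).congr_deriv (by ring)
  -- membership of the infimum
  have hmem : ∀ t : ℝ, 0 < t → t < r →
      0 ≤ extq b t ∧ psi b (t * extq b t) = extq b t * psi b t ∧ extq b t ≤ 1 := by
    intro t ht1 ht2
    have h1S : (1:ℝ) ∈ {x : ℝ | 0 ≤ x ∧ psi b (t * x) = x * psi b t} :=
      ⟨zero_le_one, by rw [mul_one, one_mul]⟩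
    have hbdd : BddBelow {x : ℝ | 0 ≤ x ∧ psi b (t * x) = x * psi b t} :=
      ⟨0, fun x hx => hx.1⟩
    have hcont : ContinuousOn (fun x => psi b (t * x) - x * psi b t) (Icc 0 1) :=
      fun x hx => ((hφd t ht1 ht2 x hx.1 hx.2).continuousAt).continuousWithinAt
    have hBclosed : IsClosed
        ((Icc (0:ℝ) 1) ∩ (fun x => psi b (t * x) - x * psi b t) ⁻¹' {0}) :=
      hcont.preimage_isClosed_of_isClosed isClosed_Icc isClosed_singleton
    have h1B : (1:ℝ) ∈ (Icc (0:ℝ) 1) ∩ (fun x => psi b (t * x) - x * psi b t) ⁻¹' {0} :=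
      ⟨⟨zero_le_one, le_rfl⟩, by simp [mul_one]⟩
    have hBbdd : BddBelow ((Icc (0:ℝ) 1) ∩ (fun x => psi b (t * x) - x * psi b t) ⁻¹' {0}) :=
      ⟨0, fun x hx => hx.1.1⟩
    have hBS : ((Icc (0:ℝ) 1) ∩ (fun x => psi b (t * x) - x * psi b t) ⁻¹' {0}) ⊆
        {x : ℝ | 0 ≤ x ∧ psi b (t * x) = x * psi b t} := by
      intro x hx
      exact ⟨hx.1.1, sub_eq_zero.1 hx.2⟩
    have hinf : extq b t =
        sInf ((Icc (0:ℝ) 1) ∩ (fun x => psi b (t * x) - x * psi b t) ⁻¹' {0}) := by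
      rw [extq]
      apply le_antisymm
      · exact csInf_le_csInf hbdd ⟨1, h1B⟩ hBS
      · apply le_csInf ⟨1, h1S⟩
        intro x hx
        by_cases hx1 : x ≤ 1
        · exact csInf_le hBbdd ⟨⟨hx.1, hx1⟩, sub_eq_zero_of_eq hx.2⟩
        · exact le_trans (csInf_le hBbdd h1B) (le_of_not_ge hx1)
    have hmemB := hBclosed.csInf_mem ⟨1, h1B⟩ hBbdd
    rw [← hinf] at hmemB
    exact ⟨hmemB.1.1, sub_eq_zero.1 hmemB.2, hmemB.1.2⟩
  -- subcritical: extinction probability is 1 for t ≤ τ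
  have hsub : ∀ t : ℝ, 0 < t → t ≤ τ → extq b t = 1 := by
    intro t ht1 ht2
    have htr : t < r := lt_of_le_of_lt ht2 hτr
    obtain ⟨hq0, hqfix, hq1⟩ := hmem t ht1 htr
    rcases eq_or_lt_of_le hq1 with h | h
    · exact h
    exfalso
    have hφq : psi b (t * extq b t) - extq b t * psi b t = 0 := sub_eq_zero_of_eq hqfix
    have hφ1 : psi b (t * 1) - 1 * psi b t = 0 := by rw [mul_one, one_mul, sub_self]
    obtain ⟨c, hc, hc0⟩ := exists_hasDerivAt_eq_zero
      (f := fun x => psi b (t * x) - x * psi b t)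
      (f' := fun x => t * sP1 b (t * x) - psi b t) h
      (fun x hx => ((hφd t ht1 htr x (le_trans hq0 hx.1) hx.2).continuousAt).continuousWithinAt)
      (hφq.trans hφ1.symm)
      (fun x hx => hφd t ht1 htr x (le_trans hq0 hx.1.le) hx.2.le)
    have hgt : 0 ≤ gg t := by
      rcases eq_or_lt_of_le ht2 with he | hlt
      · rw [he, hGτ]
      · have := hGanti ⟨ht1.le, htr⟩ ⟨hτ0.le, hτr⟩ hlt
        rw [hGτ] at this
        exact this.le
    have htc : t * c < t := mul_lt_of_lt_one_right ht1 hc.2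
    have h1 : sP1 b (t * c) < sP1 b t :=
      hsP1mono ⟨mul_nonneg ht1.le (le_trans hq0 hc.1.le), lt_trans htc htr⟩
        ⟨ht1.le, htr⟩ htc
    have hgg : gg t = psi b t - t * sP1 b t := rfl
    have h2 : t * sP1 b (t * c) < t * sP1 b t := mul_lt_mul_of_pos_left h1 ht1
    linarith only [hgt, hc0, h2, hgg]
  constructor
  · -- left limit
    have hev : (fun t => (extq b t - 1) / (t - τ)) =ᶠ[𝓝[<] τ] (fun _ => (0:ℝ)) := by
      filter_upwards [Ioo_mem_nhdsLT_of_mem (⟨hτ0, le_rfl⟩ : τ ∈ Ioc 0 τ)] with t ht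
      rw [hsub t ht.1 ht.2.le, sub_self, zero_div]
    exact Tendsto.congr' hev.symm tendsto_const_nhds
  · -- right limit
    -- key identity via a double Rolle argument
    have hkey : ∀ t : ℝ, τ < t → t < r → extq b t < 1 ∧ ∃ ξ : ℝ, extq b t < ξ ∧ ξ < 1 ∧
        extq b t - 1 = 2 * gg t / (t ^ 2 * sP2 b (t * ξ)) := by
      intro t ht1 ht2
      have ht0 : 0 < t := lt_trans hτ0 ht1
      obtain ⟨hq0, hqfix, hq1⟩ := hmem t ht0 ht2
      have hGneg : gg t < 0 := by
        have := hGanti ⟨hτ0.le, hτr⟩ ⟨ht0.le, ht2⟩ ht1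
        rw [hGτ] at this
        exact this
      have hgg : gg t = psi b t - t * sP1 b t := rfl
      have hdpos : 0 < t * sP1 b t - psi b t := by linarith
      -- extq b t < 1
      have hql1 : extq b t < 1 := by
        have hd1 : HasDerivAt (fun x : ℝ => psi b (t * x) - x * psi b t)
            (t * sP1 b t - psi b t) 1 := by
          have := hφd t ht0 ht2 1 zero_le_one le_rfl
          rwa [mul_one] at this
        have hslope := hasDerivAt_iff_tendsto_slope.1 hd1
        have hslope2 : Tendsto (slope (fun x : ℝ => psi b (t * x) - x * psi b t) 1)
            (𝓝[<] (1:ℝ)) (𝓝 (t * sP1 b t - psi b t)) :=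
          hslope.mono_left (nhdsWithin_mono _ (fun x hx => ne_of_lt hx))
        have hev : ∀ᶠ x in 𝓝[<] (1:ℝ),
            0 < slope (fun x : ℝ => psi b (t * x) - x * psi b t) 1 x :=
          hslope2.eventually (eventually_gt_nhds hdpos)
        have hev2 : Ioo (0:ℝ) 1 ∈ 𝓝[<] (1:ℝ) :=
          Ioo_mem_nhdsLT_of_mem (⟨zero_lt_one, le_rfl⟩ : (1:ℝ) ∈ Ioc 0 1)
        obtain ⟨x₀, hx₀s, hx₀m⟩ := (hev.and (eventually_of_mem hev2 (fun x hx => hx))).exists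
        have hφ1 : psi b (t * 1) - 1 * psi b t = 0 := by rw [mul_one, one_mul, sub_self]
        have hφx₀ : psi b (t * x₀) - x₀ * psi b t < 0 := by
          rw [slope_def_field] at hx₀s
          rw [hφ1] at hx₀s
          have hx01 : x₀ - 1 < 0 := by linarith [hx₀m.2]
          rcases div_pos_iff.1 hx₀s with ⟨h1, h2⟩ | ⟨h1, h2⟩
          · linarith
          · linarith
        have hφ0 : 0 < psi b (t * 0) - 0 * psi b t := by
          rw [mul_zero, zero_mul, sub_zero, hpsi0]
          exact hb0
        have hcont : ContinuousOn (fun x : ℝ => psi b (t * x) - x * psi b t) (Icc 0 x₀) :=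
          fun x hx => ((hφd t ht0 ht2 x hx.1
            (le_trans hx.2 hx₀m.2.le)).continuousAt).continuousWithinAt
        have h0m : (0:ℝ) ∈ Icc (psi b (t * x₀) - x₀ * psi b t) (psi b (t * 0) - 0 * psi b t) :=
          ⟨hφx₀.le, hφ0.le⟩
        obtain ⟨z, hz, hzval⟩ := intermediate_value_Icc' hx₀m.1.le hcont h0m
        have hzS : extq b t ≤ z :=
          csInf_le ⟨0, fun x hx => hx.1⟩ ⟨hz.1, sub_eq_zero.1 hzval⟩
        exact lt_of_le_of_lt (hzS.trans hz.2) hx₀m.2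
      -- double Rolle
      have h1q : (0:ℝ) < 1 - extq b t := by linarith
      set d : ℝ := t * sP1 b t - psi b t with hddef
      set K : ℝ := d / (1 - extq b t) with hKdef
      set Gf : ℝ → ℝ := fun x =>
        (psi b (t * x) - x * psi b t) - d * (x - 1) - K * (x - 1) ^ 2 with hGfdef
      have hGf1 : Gf 1 = 0 := by simp [hGfdef]
      have hGfq : Gf (extq b t) = 0 := by
        simp only [hGfdef, hKdef]
        rw [sub_eq_zero_of_eq hqfix]
        field_simp
        ring
      have hGfd : ∀ x : ℝ, 0 ≤ x → x ≤ 1 → HasDerivAt Gf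
          ((t * sP1 b (t * x) - psi b t) - d - K * (2 * (x - 1))) x := by
        intro x hx1 hx2
        have h1 := hφd t ht0 ht2 x hx1 hx2
        have h2 : HasDerivAt (fun x : ℝ => d * (x - 1)) d x := by
          simpa using ((hasDerivAt_id x).sub_const 1).const_mul d
        have h3 : HasDerivAt (fun x : ℝ => K * (x - 1) ^ 2) (K * (2 * (x - 1))) x := by
          have := (((hasDerivAt_id x).sub_const 1).pow 2).const_mul K
          simpa using this
        exact ((h1.sub h2).sub h3).congr_deriv (by ring)
      obtain ⟨c, hc, hc0⟩ := exists_hasDerivAt_eq_zero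
        (f := Gf) (f' := fun x => (t * sP1 b (t * x) - psi b t) - d - K * (2 * (x - 1)))
        hql1
        (fun x hx => ((hGfd x (le_trans hq0 hx.1) hx.2).continuousAt).continuousWithinAt)
        (hGfq.trans hGf1.symm)
        (fun x hx => hGfd x (le_trans hq0 hx.1.le) hx.2.le)
      have hGf'1 : (t * sP1 b (t * 1) - psi b t) - d - K * (2 * ((1:ℝ) - 1)) = 0 := by
        rw [mul_one, hddef]
        ring
      have hc01 : 0 ≤ c := le_trans hq0 hc.1.le
      obtain ⟨ξ, hξ, hξ0⟩ := exists_hasDerivAt_eq_zero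
        (f := fun x => (t * sP1 b (t * x) - psi b t) - d - K * (2 * (x - 1)))
        (f' := fun x => t ^ 2 * sP2 b (t * x) - 2 * K)
        hc.2
        (fun x hx => by
          have hd2 := hφdd t ht0 ht2 x (le_trans hc01 hx.1) hx.2
          have h2 : HasDerivAt (fun x : ℝ => K * (2 * (x - 1))) (2 * K) x := by
            simpa using ((((hasDerivAt_id x).sub_const 1).const_mul 2).const_mul K).congr_deriv
              (by ring)
          exact ((hd2.sub_const d).sub h2).continuousAt.continuousWithinAt)
        (hc0.trans hGf'1.symm)
        (fun x hx => by
          have hd2 := hφdd t ht0 ht2 x (le_trans hc01 hx.1.le) hx.2.le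
          have h2 : HasDerivAt (fun x : ℝ => K * (2 * (x - 1))) (2 * K) x := by
            simpa using ((((hasDerivAt_id x).sub_const 1).const_mul 2).const_mul K).congr_deriv
              (by ring)
          exact ((hd2.sub_const d).sub h2).congr_deriv (by ring))
      refine ⟨hql1, ξ, lt_trans hc.1 hξ.1, hξ.2, ?_⟩
      have hD : t ^ 2 * sP2 b (t * ξ) = 2 * K := by linarith [hξ0]
      have hGd : gg t = -d := by rw [hggdef, hddef]; ring
      rw [hD, hGd, hKdef]
      have hdne : d ≠ 0 := ne_of_gt hdpos
      field_simp
      ring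
    -- continuity of extq from the right at τ
    have hq_tendsto : Tendsto (extq b) (𝓝[>] τ) (𝓝 1) := by
      rw [Metric.tendsto_nhds]
      intro ε hε
      set ε₁ : ℝ := min ε (1/2) with hε₁def
      have hε₁pos : 0 < ε₁ := lt_min hε one_half_pos
      have hε₁le : ε₁ ≤ 1/2 := min_le_right _ _
      set e : ℝ := 1 - ε₁ with hedef
      have he0 : 0 ≤ e := by simp only [hedef]; linarith
      have he1 : e < 1 := by simp only [hedef]; linarith
      -- φτ is positive on [0, e]
      have hτpos : ∀ x ∈ Icc (0:ℝ) e, 0 < psi b (τ * x) - x * psi b τ := by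
        intro x hx
        by_contra hle
        push_neg at hle
        have hφ0 : 0 < psi b (τ * 0) - 0 * psi b τ := by
          rw [mul_zero, zero_mul, sub_zero, hpsi0]; exact hb0
        have hcont : ContinuousOn (fun x : ℝ => psi b (τ * x) - x * psi b τ) (Icc 0 x) :=
          fun y hy => ((hφd τ hτ0 hτr y hy.1
            (le_trans hy.2 (le_trans hx.2 he1.le))).continuousAt).continuousWithinAt
        have h0m : (0:ℝ) ∈ Icc (psi b (τ * x) - x * psi b τ) (psi b (τ * 0) - 0 * psi b τ) :=
          ⟨hle, hφ0.le⟩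
        obtain ⟨z, hz, hzval⟩ := intermediate_value_Icc' hx.1 hcont h0m
        have hzS : extq b τ ≤ z :=
          csInf_le ⟨0, fun y hy => hy.1⟩ ⟨hz.1, sub_eq_zero.1 hzval⟩
        rw [hsub τ hτ0 le_rfl] at hzS
        have : z ≤ e := le_trans hz.2 hx.2
        linarith
      -- minimum of φτ over [0, e]
      have hcontτ : ContinuousOn (fun x : ℝ => psi b (τ * x) - x * psi b τ) (Icc 0 e) :=
        fun y hy => ((hφd τ hτ0 hτr y hy.1
          (le_trans hy.2 he1.le)).continuousAt).continuousWithinAt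
      obtain ⟨xm, hxm, hxmin⟩ := isCompact_Icc.exists_isMinOn ⟨0, ⟨le_rfl, he0⟩⟩ hcontτ
      set δ : ℝ := psi b (τ * xm) - xm * psi b τ with hδdef
      have hδpos : 0 < δ := hτpos xm hxm
      -- bound on sP1 over [0, r₁]
      set r₁ : ℝ := (τ + r) / 2 with hr₁def
      have hτr₁ : τ < r₁ := by simp only [hr₁def]; linarith
      have hr₁r : r₁ < r := by simp only [hr₁def]; linarith
      set M : ℝ := sP1 b r₁ with hMdef
      have hM0 : 0 ≤ M := hsP1_nonneg r₁ (by linarith)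
      have hMb : ∀ y : ℝ, 0 ≤ y → y ≤ r₁ → sP1 b y ≤ M := by
        intro y h1 h2
        rcases eq_or_lt_of_le h2 with he' | hlt
        · rw [he']
        · exact (hsP1mono ⟨h1, lt_trans hlt hr₁r⟩ ⟨by linarith, hr₁r⟩ hlt).le
      set T : ℝ := min r₁ (τ + δ / (M + 1)) with hTdef
      have hTτ : τ < T := by
        have : 0 < δ / (M + 1) := div_pos hδpos (by linarith)
        exact lt_min hτr₁ (by linarith)
      have hevset : Ioo τ T ∈ 𝓝[>] τ := Ioo_mem_nhdsGT_of_mem ⟨le_rfl, hTτ⟩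
      filter_upwards [hevset] with t ht
      have ht1 : τ < t := ht.1
      have ht0 : 0 < t := lt_trans hτ0 ht1
      have htr₁ : t < r₁ := lt_of_lt_of_le ht.2 (min_le_left _ _)
      have htr : t < r := lt_trans htr₁ hr₁r
      have htδ : t - τ < δ / (M + 1) := by
        have := lt_of_lt_of_le ht.2 (min_le_right _ _)
        linarith
      obtain ⟨hq0, hqfix, hq1⟩ := hmem t ht0 htr
      rw [Real.dist_eq]
      have hqgt : e < extq b t := by
        by_contra hqe
        push_neg at hqe
        -- MVT in the parameter
        obtain ⟨c, hcm, hcval⟩ := exists_hasDerivAt_eq_slope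
          (f := fun u => psi b (u * extq b t) - extq b t * psi b u)
          (f' := fun u => sP1 b (u * extq b t) * extq b t - extq b t * sP1 b u)
          ht1
          (fun y hy => by
            have hy0 : 0 < y := lt_of_lt_of_le hτ0 hy.1
            have hyr : y < r := lt_of_le_of_lt hy.2 htr
            have hyq : y * extq b t ∈ Ioo (-r) r :=
              ⟨by linarith [mul_nonneg hy0.le hq0],
               by linarith [mul_le_of_le_one_right hy0.le hq1]⟩
            have h1 : HasDerivAt (fun u : ℝ => psi b (u * extq b t))
                (sP1 b (y * extq b t) * extq b t) y :=
              (hP (y * extq b t) hyq).comp (h := fun u : ℝ => u * extq b t) y (by simpa using (hasDerivAt_id y).mul_const (extq b t))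
            have h2 : HasDerivAt (fun u : ℝ => extq b t * psi b u) (extq b t * sP1 b y) y :=
              (hP y (hmem_s hy0.le hyr)).const_mul (extq b t)
            exact (h1.sub h2).continuousAt.continuousWithinAt)
          (fun y hy => by
            have hy0 : 0 < y := lt_trans hτ0 hy.1
            have hyr : y < r := lt_trans hy.2 htr
            have hyq : y * extq b t ∈ Ioo (-r) r :=
              ⟨by linarith [mul_nonneg hy0.le hq0],
               by linarith [mul_le_of_le_one_right hy0.le hq1]⟩
            have h1 : HasDerivAt (fun u : ℝ => psi b (u * extq b t))
                (sP1 b (y * extq b t) * extq b t) y :=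
              (hP (y * extq b t) hyq).comp (h := fun u : ℝ => u * extq b t) y (by simpa using (hasDerivAt_id y).mul_const (extq b t))
            have h2 : HasDerivAt (fun u : ℝ => extq b t * psi b u) (extq b t * sP1 b y) y :=
              (hP y (hmem_s hy0.le hyr)).const_mul (extq b t)
            exact (h1.sub h2).congr_deriv (by ring))
        -- the slope value
        have hnum : psi b (t * extq b t) - extq b t * psi b t = 0 := sub_eq_zero_of_eq hqfix
        have hc0 : 0 < c := lt_trans hτ0 hcm.1
        have hcr₁ : c ≤ r₁ := by linarith [hcm.2, htr₁]
        have hcq_le : c * extq b t ≤ c := mul_le_of_le_one_right hc0.le hq1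
        have hcq0 : 0 ≤ c * extq b t := mul_nonneg hc0.le hq0
        have hs1 : sP1 b (c * extq b t) ≤ sP1 b c := by
          rcases eq_or_lt_of_le hcq_le with he' | hlt
          · rw [he']
          · exact (hsP1mono ⟨hcq0, by linarith [lt_of_le_of_lt hcr₁ hr₁r]⟩
              ⟨hc0.le, lt_of_le_of_lt hcr₁ hr₁r⟩ hlt).le
        have hs2 : sP1 b c ≤ M := hMb c hc0.le hcr₁
        have hs0 : 0 ≤ sP1 b (c * extq b t) := hsP1_nonneg _ hcq0
        -- φτ(q) value from the slope identity
        have hslope_eq : sP1 b (c * extq b t) * extq b t - extq b t * sP1 b c =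
            (0 - (psi b (τ * extq b t) - extq b t * psi b τ)) / (t - τ) := by
          rw [← hnum]
          exact hcval
        have hδle : δ ≤ psi b (τ * extq b t) - extq b t * psi b τ :=
          isMinOn_iff.1 hxmin _ ⟨hq0, hqe⟩
        have httpos : 0 < t - τ := by linarith
        have hineq : sP1 b (c * extq b t) * extq b t - extq b t * sP1 b c ≥ -M := by
          have ha : 0 ≤ sP1 b (c * extq b t) * extq b t := mul_nonneg hs0 hq0
          have hb : extq b t * sP1 b c ≤ M := le_trans
            (mul_le_of_le_one_left (hsP1_nonneg c hc0.le) hq1) hs2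
          linarith only [ha, hb]
        rw [zero_sub] at hslope_eq
        have hfq : (sP1 b (c * extq b t) * extq b t - extq b t * sP1 b c) * (t - τ) =
            -(psi b (τ * extq b t) - extq b t * psi b τ) :=
          (eq_div_iff (ne_of_gt httpos)).1 hslope_eq
        have hprod : (0:ℝ) ≤
            ((sP1 b (c * extq b t) * extq b t - extq b t * sP1 b c) + M) * (t - τ) :=
          mul_nonneg (by linarith only [hineq]) httpos.le
        have hFb : psi b (τ * extq b t) - extq b t * psi b τ ≤ M * (t - τ) := by
          linarith only [hfq, hprod]
        have hM1 : (0:ℝ) < M + 1 := by linarith only [hM0]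
        rw [lt_div_iff₀ hM1] at htδ
        linarith only [hδle, hFb, htδ, httpos]
      have habs : |extq b t - 1| = 1 - extq b t := by
        rw [abs_of_nonpos (by linarith only [hq1])]
        ring
      rw [habs]
      have hle : ε₁ ≤ ε := min_le_left _ _
      simp only [hedef] at hqgt
      linarith only [hqgt, hle]
    -- assembling the limit
    set Xi : ℝ → ℝ := fun t =>
      if h : τ < t ∧ t < r then (hkey t h.1 h.2).2.choose else 1 with hXidef
    have hXi : ∀ t : ℝ, τ < t → t < r → extq b t < Xi t ∧ Xi t < 1 ∧
        extq b t - 1 = 2 * gg t / (t ^ 2 * sP2 b (t * Xi t)) := by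
      intro t h1 h2
      have := (hkey t h1 h2).2.choose_spec
      simp only [hXidef, dif_pos (⟨h1, h2⟩ : τ < t ∧ t < r)]
      exact this
    have hIoo : Ioo τ r ∈ 𝓝[>] τ := Ioo_mem_nhdsGT_of_mem ⟨le_rfl, hτr⟩
    -- limit of gg t / (t - τ)
    have T1 : Tendsto (fun t => gg t / (t - τ)) (𝓝[>] τ) (𝓝 (-(τ * sP2 b τ))) := by
      have hdG := hGderiv τ (hmem_s hτ0.le hτr)
      have hs := hasDerivAt_iff_tendsto_slope.1 hdG
      have hs2 : Tendsto (slope gg τ) (𝓝[>] τ) (𝓝 (-(τ * sP2 b τ))) :=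
        hs.mono_left (nhdsWithin_mono _ (fun x hx => ne_of_gt hx))
      apply hs2.congr
      intro x
      rw [slope_def_field, hGτ, sub_zero]
    have hτid : Tendsto (fun t : ℝ => t) (𝓝[>] τ) (𝓝 τ) :=
      tendsto_id.mono_left nhdsWithin_le_nhds
    have hprod : Tendsto (fun t => t * extq b t) (𝓝[>] τ) (𝓝 τ) := by
      have := hτid.mul hq_tendsto
      rwa [mul_one] at this
    have T2 : Tendsto (fun t => t * Xi t) (𝓝[>] τ) (𝓝 τ) := by
      apply tendsto_of_tendsto_of_tendsto_of_le_of_le' hprod hτid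
      · filter_upwards [hIoo] with t ht
        exact mul_le_mul_of_nonneg_left (hXi t ht.1 ht.2).1.le (by linarith [ht.1])
      · filter_upwards [hIoo] with t ht
        exact mul_le_of_le_one_right (by linarith [ht.1]) (hXi t ht.1 ht.2).2.1.le
    have T3 : Tendsto (fun t => t ^ 2 * sP2 b (t * Xi t)) (𝓝[>] τ)
        (𝓝 (τ ^ 2 * sP2 b τ)) := by
      have hc : ContinuousAt (sP2 b) τ := (hP2 τ (hmem_s hτ0.le hτr)).continuousAt
      exact (hτid.pow 2).mul (hc.tendsto.comp T2)
    have hden : τ ^ 2 * sP2 b τ ≠ 0 := by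
      have := hsP2_pos τ hτ0 hτr
      positivity
    have Tfin : Tendsto (fun t => 2 * (gg t / (t - τ)) / (t ^ 2 * sP2 b (t * Xi t)))
        (𝓝[>] τ) (𝓝 (2 * (-(τ * sP2 b τ)) / (τ ^ 2 * sP2 b τ))) :=
      (T1.const_mul 2).div T3 hden
    have hval : 2 * (-(τ * sP2 b τ)) / (τ ^ 2 * sP2 b τ) = -2 / τ := by
      have h1 : sP2 b τ ≠ 0 := (hsP2_pos τ hτ0 hτr).ne'
      field_simp
    rw [hval] at Tfin
    apply Tendsto.congr' _ Tfin
    filter_upwards [hIoo] with t ht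
    have heq := (hXi t ht.1 ht.2).2.2
    rw [heq]
    ring
end
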